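/- arXiv:2211.04322 — 8 statements merged into one kernel-verified Lean document; each statement's English description precedes it below -/
import Mathlib

section
/- Let 𝒮 be a split system on a finite set X with |X| ≥ 3, and let x, y, z ∈ X be distinct. Then the map ψ : 𝒮 → P(X) that assigns to each split S ∈ 𝒮 the part of S containing at least two elements of {x,y,z} is a vertex of the Buneman graph B(𝒮), and it is the unique median of the leaves φ_x, φ_y, φ_z in B(𝒮). -/
namespace InjectiveSplitSystems

open Finset

variable {α : Type*} [DecidableEq α]

/-- A split of `X`: an unordered bipartition of `X` into two nonempty disjoint parts,
represented as the two-element set `{A, B}` of its parts. -/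
def IsSplit (X : Finset α) (S : Finset (Finset α)) : Prop :=
  ∃ A B : Finset α, S = {A, B} ∧ A ∪ B = X ∧ A ∩ B = ∅ ∧ A ≠ ∅ ∧ B ≠ ∅

/-- `S` is an `r`-split of `X`: a split of `X` whose minimum part size is `r`. -/
def IsRSplit (X : Finset α) (r : ℕ) (S : Finset (Finset α)) : Prop :=
  IsSplit X S ∧ (∃ A ∈ S, A.card = r) ∧ ∀ A ∈ S, r ≤ A.card

/-- A split system on `X`: a set of splits of `X` containing all trivial splits
`{x} | X \ {x}`, `x ∈ X`. -/
def IsSplitSystem (X : Finset α) (𝒮 : Finset (Finset (Finset α))) : Prop :=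
  (∀ S ∈ 𝒮, IsSplit X S) ∧ ∀ x ∈ X, ({{x}, X \ {x}} : Finset (Finset α)) ∈ 𝒮

/-- `phiNe Y Y' S` says `φ_Y(S) ≠ φ_{Y'}(S)`: the part of `S` containing at least two
elements of the 3-set `Y` differs from the part of `S` containing at least two
elements of the 3-set `Y'`. -/
def phiNe (Y Y' : Finset α) (S : Finset (Finset α)) : Prop :=
  ∃ t ∈ S, ∃ t' ∈ S, t ≠ t' ∧ 2 ≤ (Y ∩ t).card ∧ 2 ≤ (Y' ∩ t').card

/-- A split system on `X` is injective if for all distinct 3-subsets `Y`, `Y'` of `X`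
there is a split `S ∈ 𝒮` with `φ_Y(S) ≠ φ_{Y'}(S)`. -/
def IsInjective (X : Finset α) (𝒮 : Finset (Finset (Finset α))) : Prop :=
  ∀ Y Y' : Finset α, Y ⊆ X → Y' ⊆ X → Y.card = 3 → Y'.card = 3 → Y ≠ Y' →
    ∃ S ∈ 𝒮, phiNe Y Y' S

/-- The restriction `S|_Y` of a split to `Y`, as the set of restricted parts. -/
def restrictSplit (S : Finset (Finset α)) (Y : Finset α) : Finset (Finset α) :=
  S.image (· ∩ Y)

open scoped Classical in
/-- The restriction `𝒮|_Y` of a split system to `Y`: all splits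
`(A ∩ Y) | (B ∩ Y)` with `A|B ∈ 𝒮` and both intersections nonempty. -/
noncomputable def restrictSS (𝒮 : Finset (Finset (Finset α))) (Y : Finset α) :
    Finset (Finset (Finset α)) :=
  (𝒮.image fun S => restrictSplit S Y).filter fun T => ∀ t ∈ T, t ≠ ∅

/-- `𝒮` 4-dices `X`. -/
def FourDices (X : Finset α) (𝒮 : Finset (Finset (Finset α))) : Prop :=
  X.card < 4 ∨ ∀ Y ⊆ X, Y.card = 4 →
    ∃ 𝒯 ⊆ restrictSS 𝒮 Y, 2 ≤ 𝒯.card ∧ ∀ S ∈ 𝒯, IsRSplit Y 2 S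

/-- `𝒮` 5-dices `X`. -/
def FiveDices (X : Finset α) (𝒮 : Finset (Finset (Finset α))) : Prop :=
  X.card < 5 ∨ ∀ Y ⊆ X, Y.card = 5 →
    ∃ 𝒯 ⊆ restrictSS 𝒮 Y, 5 ≤ 𝒯.card ∧ ∀ S ∈ 𝒯, IsRSplit Y 2 S

/-- `𝒮` 6-dices `X`: every 6-subset restriction contains a 3-split or a triangle
of 2-splits. -/
def SixDices (X : Finset α) (𝒮 : Finset (Finset (Finset α))) : Prop :=
  X.card < 6 ∨ ∀ Y ⊆ X, Y.card = 6 →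
    (∃ S ∈ restrictSS 𝒮 Y, IsRSplit Y 3 S) ∨
    (∃ x ∈ Y, ∃ y ∈ Y, ∃ z ∈ Y, x ≠ y ∧ x ≠ z ∧ y ≠ z ∧
      ({{x, y}, Y \ {x, y}} : Finset (Finset α)) ∈ restrictSS 𝒮 Y ∧
      ({{x, z}, Y \ {x, z}} : Finset (Finset α)) ∈ restrictSS 𝒮 Y ∧
      ({{y, z}, Y \ {y, z}} : Finset (Finset α)) ∈ restrictSS 𝒮 Y)

/-- Two splits are incompatible if they are distinct and all four pairwise
intersections of their parts are nonempty. -/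
def Incompatible (S T : Finset (Finset α)) : Prop :=
  S ≠ T ∧ ∀ A ∈ S, ∀ B ∈ T, A ∩ B ≠ ∅

open scoped Classical in
/-- The dimension of a split system: maximum size of a pairwise incompatible subset
(which is `1` when all splits are pairwise compatible and `𝒮` is nonempty). -/
noncomputable def dimSS (𝒮 : Finset (Finset (Finset α))) : ℕ :=
  (𝒮.powerset.filter fun 𝒯 => ∀ S ∈ 𝒯, ∀ T ∈ 𝒯, S ≠ T → Incompatible S T).sup Finset.card

/-- The injective dimension `ID(n)`: minimum dimension of an injective split system
on `{1, …, n}`. -/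
noncomputable def ID (n : ℕ) : ℕ :=
  sInf {d : ℕ | ∃ 𝒮 : Finset (Finset (Finset ℕ)),
    IsSplitSystem (Finset.Icc 1 n) 𝒮 ∧ IsInjective (Finset.Icc 1 n) 𝒮 ∧ dimSS 𝒮 = d}

/-- The injective 2-split dimension `ID₂(n)`: minimum dimension of an injective split
system on `{1, …, n}` all of whose non-trivial splits have size 2. -/
noncomputable def ID2 (n : ℕ) : ℕ :=
  sInf {d : ℕ | ∃ 𝒮 : Finset (Finset (Finset ℕ)),
    IsSplitSystem (Finset.Icc 1 n) 𝒮 ∧ IsInjective (Finset.Icc 1 n) 𝒮 ∧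
    (∀ S ∈ 𝒮, IsRSplit (Finset.Icc 1 n) 1 S ∨ IsRSplit (Finset.Icc 1 n) 2 S) ∧
    dimSS 𝒮 = d}

/-- `𝒮` is rooted-injective relative to `r`. -/
def IsRootedInjective (X : Finset α) (r : α) (𝒮 : Finset (Finset (Finset α))) : Prop :=
  ∀ Z Z' : Finset α, Z ⊆ X \ {r} → Z' ⊆ X \ {r} → Z.card = 2 → Z'.card = 2 → Z ≠ Z' →
    ∃ S ∈ 𝒮, phiNe (insert r Z) (insert r Z') S

/-- The rooted-injective dimension `ID^r(n)`: minimum dimension of a split system on an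
`n`-element set that is rooted-injective relative to a given element. -/
noncomputable def IDr (n : ℕ) : ℕ :=
  sInf {d : ℕ | ∃ 𝒮 : Finset (Finset (Finset ℕ)),
    IsSplitSystem (Finset.Icc 1 n) 𝒮 ∧ IsRootedInjective (Finset.Icc 1 n) 1 𝒮 ∧
    dimSS 𝒮 = d}

/-- `𝒮` is circular: there is a labelling `x_1, …, x_n` of `X` such that every split
of `𝒮` has the form `{x_i, …, x_j} | complement`. -/
def IsCircular (X : Finset α) (𝒮 : Finset (Finset (Finset α))) : Prop :=
  ∃ f : ℕ → α, Set.InjOn f ↑(Finset.Icc 1 X.card) ∧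
    (Finset.Icc 1 X.card).image f = X ∧
    ∀ S ∈ 𝒮, ∃ i j : ℕ, 1 ≤ i ∧ i ≤ j ∧ j ≤ X.card ∧
      S = {(Finset.Icc i j).image f, X \ (Finset.Icc i j).image f}

/-- `𝒮` is maximal circular: circular and not properly contained in any circular
split system on `X`. -/
def IsMaximalCircular (X : Finset α) (𝒮 : Finset (Finset (Finset α))) : Prop :=
  IsCircular X 𝒮 ∧ ∀ 𝒮' : Finset (Finset (Finset α)),
    IsSplitSystem X 𝒮' → IsCircular X 𝒮' → 𝒮 ⊆ 𝒮' → 𝒮' = 𝒮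

/-- The degree of `x` in the graph `P(𝒮)` on vertex set `X` whose edges are the
pairs `{x, y}` with `xy | X − {x,y} ∈ 𝒮`. -/
def degP (X : Finset α) (𝒮 : Finset (Finset (Finset α))) (x : α) : ℕ :=
  ((X \ {x}).filter fun y => ({{x, y}, X \ {x, y}} : Finset (Finset α)) ∈ 𝒮).card

/-- `P(𝒮)` contains a 3-clique. -/
def HasTriangle (X : Finset α) (𝒮 : Finset (Finset (Finset α))) : Prop :=
  ∃ x ∈ X, ∃ y ∈ X, ∃ z ∈ X, x ≠ y ∧ x ≠ z ∧ y ≠ z ∧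
    ({{x, y}, X \ {x, y}} : Finset (Finset α)) ∈ 𝒮 ∧
    ({{x, z}, X \ {x, z}} : Finset (Finset α)) ∈ 𝒮 ∧
    ({{y, z}, X \ {y, z}} : Finset (Finset α)) ∈ 𝒮

/-- Conditions (B1) and (B2) for a map to be a vertex of the Buneman graph. -/
def IsBunemanVertex (𝒮 : Finset (Finset (Finset α))) (φ : {S // S ∈ 𝒮} → Finset α) : Prop :=
  (∀ S, φ S ∈ S.1) ∧ ∀ S S', S ≠ S' → (φ S ∩ φ S').Nonempty

/-- The vertex set of the Buneman graph `B(𝒮)`. -/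
abbrev BunemanVertex (𝒮 : Finset (Finset (Finset α))) : Type _ :=
  {φ : {S // S ∈ 𝒮} → Finset α // IsBunemanVertex 𝒮 φ}

/-- The Buneman graph `B(𝒮)`: two vertices are adjacent iff they differ on exactly
one split. -/
def BunemanGraph (𝒮 : Finset (Finset (Finset α))) : SimpleGraph (BunemanVertex 𝒮) where
  Adj φ ψ := ∃! S, φ.1 S ≠ ψ.1 S
  symm := by
    constructor
    rintro φ ψ ⟨S, hS, hU⟩
    exact ⟨S, hS.symm, fun T hT => hU T hT.symm⟩
  loopless := by
    constructor
    rintro φ ⟨S, hS, -⟩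
    exact hS rfl

/-- `m` is a median of `u`, `v`, `w` in the graph `G`. -/
def IsMedian {V : Type*} (G : SimpleGraph V) (u v w m : V) : Prop :=
  G.dist u m + G.dist m v = G.dist u v ∧
  G.dist v m + G.dist m w = G.dist v w ∧
  G.dist u m + G.dist m w = G.dist u w


/-! ### Auxiliary lemmas for statement 0 -/

section Aux

variable {X : Finset α} {𝒮 : Finset (Finset (Finset α))}

lemma compl_eq {X A B : Finset α} (hU : A ∪ B = X) (hI : A ∩ B = ∅) : B = X \ A := by
  ext a
  simp only [Finset.mem_sdiff, ← hU, Finset.mem_union]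
  constructor
  · intro ha
    refine ⟨Or.inr ha, fun hA => ?_⟩
    have : a ∈ A ∩ B := Finset.mem_inter.2 ⟨hA, ha⟩
    simp [hI] at this
  · rintro ⟨h1 | h1, h2⟩
    · exact absurd h1 h2
    · exact h1

lemma split_pair {S : Finset (Finset α)} (hS : IsSplit X S)
    {P : Finset α} (hP : P ∈ S) : S = {P, X \ P} := by
  obtain ⟨A, B, rfl, hU, hI, -, -⟩ := hS
  rcases Finset.mem_insert.1 hP with rfl | hP
  · rw [← compl_eq hU hI]
  · rw [Finset.mem_singleton] at hP; subst hP
    have hA : A = X \ P :=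
      compl_eq (by rw [Finset.union_comm]; exact hU) (by rw [Finset.inter_comm]; exact hI)
    rw [hA]
    exact Finset.pair_comm _ _

lemma part_subset {S : Finset (Finset α)} (hS : IsSplit X S)
    {P : Finset α} (hP : P ∈ S) : P ⊆ X := by
  obtain ⟨A, B, rfl, hU, -, -, -⟩ := hS
  rcases Finset.mem_insert.1 hP with rfl | hP
  · exact hU ▸ Finset.subset_union_left
  · rw [Finset.mem_singleton] at hP; subst hP
    exact hU ▸ Finset.subset_union_right

lemma other_part {S : Finset (Finset α)} (hS : IsSplit X S)
    {P Q : Finset α} (hP : P ∈ S) (hQ : Q ∈ S) (hne : P ≠ Q) : Q = X \ P := by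
  have h := split_pair hS hP
  rw [h] at hQ
  rcases Finset.mem_insert.1 hQ with rfl | hQ
  · exact absurd rfl hne
  · exact Finset.mem_singleton.1 hQ

lemma parts_disjoint {S : Finset (Finset α)} (hS : IsSplit X S)
    {P Q : Finset α} (hP : P ∈ S) (hQ : Q ∈ S) (hne : P ≠ Q) : P ∩ Q = ∅ := by
  rw [other_part hS hP hQ hne]
  exact Finset.inter_sdiff_self _ _

lemma part_eq_of_mem {S : Finset (Finset α)} (hS : IsSplit X S)
    {P Q : Finset α} (hP : P ∈ S) (hQ : Q ∈ S) {a : α} (haP : a ∈ P) (haQ : a ∈ Q) :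
    P = Q := by
  by_contra hne
  have h := parts_disjoint hS hP hQ hne
  have : a ∈ P ∩ Q := Finset.mem_inter.2 ⟨haP, haQ⟩
  simp [h] at this

lemma split_eq_of_part {S T : Finset (Finset α)} (hS : IsSplit X S) (hT : IsSplit X T)
    {P : Finset α} (hPS : P ∈ S) (hPT : P ∈ T) : S = T := by
  rw [split_pair hS hPS, split_pair hT hPT]

/-- The set of splits on which two Buneman vertices disagree. -/
def diffs (𝒮 : Finset (Finset (Finset α))) (u v : BunemanVertex 𝒮) :
    Finset {S // S ∈ 𝒮} :=
  Finset.univ.filter fun S => u.1 S ≠ v.1 S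

lemma mem_diffs {u v : BunemanVertex 𝒮} {S : {S // S ∈ 𝒮}} :
    S ∈ diffs 𝒮 u v ↔ u.1 S ≠ v.1 S := by
  simp [diffs]

lemma card_diffs_le_walk_length {u v : BunemanVertex 𝒮}
    (p : (BunemanGraph 𝒮).Walk u v) : (diffs 𝒮 u v).card ≤ p.length := by
  induction p with
  | nil => simp [diffs]
  | @cons u w v h p ih =>
    obtain ⟨S₀, hS₀, hUniq⟩ := id h
    have hsub : diffs 𝒮 u v ⊆ insert S₀ (diffs 𝒮 w v) := by
      intro S hS
      rw [mem_diffs] at hS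
      by_cases hw : w.1 S = v.1 S
      · exact Finset.mem_insert.2 (Or.inl (hUniq S (show _ ≠ _ by rw [hw]; exact hS)))
      · exact Finset.mem_insert.2 (Or.inr (mem_diffs.2 hw))
    have h1 := Finset.card_le_card hsub
    have h2 := Finset.card_insert_le S₀ (diffs 𝒮 w v)
    simp only [SimpleGraph.Walk.length_cons]
    omega

lemma exists_flip (h𝒮 : IsSplitSystem X 𝒮) {u v : BunemanVertex 𝒮}
    (hne : (diffs 𝒮 u v).Nonempty) :
    ∃ u' : BunemanVertex 𝒮, (BunemanGraph 𝒮).Adj u u' ∧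
      (diffs 𝒮 u' v).card + 1 = (diffs 𝒮 u v).card := by
  obtain ⟨S₀, hS₀mem, hmax⟩ :=
    Finset.exists_max_image (diffs 𝒮 u v) (fun S => (v.1 S).card) hne
  have key : ∀ T : {S // S ∈ 𝒮}, T ≠ S₀ → (v.1 S₀ ∩ u.1 T).Nonempty := by
    intro T hT
    by_contra hemp
    rw [Finset.not_nonempty_iff_eq_empty] at hemp
    have hTsplit : IsSplit X T.1 := h𝒮.1 T.1 T.2
    have hS₀split : IsSplit X S₀.1 := h𝒮.1 S₀.1 S₀.2
    by_cases hTuv : u.1 T = v.1 T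
    · have := v.2.2 S₀ T (fun h => hT h.symm)
      rw [← hTuv] at this
      rw [hemp] at this
      exact Finset.not_nonempty_empty this
    · have hvT : v.1 T = X \ u.1 T :=
        other_part hTsplit (u.2.1 T) (v.2.1 T) hTuv
      have hsub : v.1 S₀ ⊆ v.1 T := by
        intro a ha
        rw [hvT, Finset.mem_sdiff]
        refine ⟨part_subset hS₀split (v.2.1 S₀) ha, fun haT => ?_⟩
        have : a ∈ v.1 S₀ ∩ u.1 T := Finset.mem_inter.2 ⟨ha, haT⟩
        simp [hemp] at this
      have hnep : v.1 S₀ ≠ v.1 T := by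
        intro heq
        have : S₀.1 = T.1 :=
          split_eq_of_part hS₀split hTsplit (v.2.1 S₀) (heq ▸ v.2.1 T)
        exact hT (Subtype.ext this.symm)
      have hlt : (v.1 S₀).card < (v.1 T).card :=
        Finset.card_lt_card (Finset.ssubset_iff_subset_ne.2 ⟨hsub, hnep⟩)
      have hle := hmax T (mem_diffs.2 hTuv)
      omega
  set f : {S // S ∈ 𝒮} → Finset α := fun T => if T = S₀ then v.1 S₀ else u.1 T with hf
  have hB1 : ∀ T, f T ∈ T.1 := by
    intro T
    by_cases h : T = S₀
    · subst h; simp only [hf, if_pos rfl]; exact v.2.1 T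
    · simp only [hf, if_neg h]; exact u.2.1 T
  have hB2 : ∀ T T', T ≠ T' → (f T ∩ f T').Nonempty := by
    intro T T' hTT'
    by_cases h1 : T = S₀
    · subst h1
      have h2 : T' ≠ T := fun h => hTT' h.symm
      simp only [hf, if_pos rfl, if_neg h2]
      exact key T' h2
    · by_cases h2 : T' = S₀
      · subst h2
        simp only [hf, if_neg h1, if_pos rfl]
        rw [Finset.inter_comm]
        exact key T h1
      · simp only [hf, if_neg h1, if_neg h2]
        exact u.2.2 T T' hTT'
  refine ⟨⟨f, hB1, hB2⟩, ⟨S₀, ?_, ?_⟩, ?_⟩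
  · simp only [hf, if_pos rfl]
    exact fun h => (mem_diffs.1 hS₀mem) h
  · intro T hT
    by_contra h
    simp only [hf, if_neg h] at hT
    exact hT rfl
  · have herase : diffs 𝒮 ⟨f, hB1, hB2⟩ v = (diffs 𝒮 u v).erase S₀ := by
      ext T
      rw [mem_diffs, Finset.mem_erase, mem_diffs]
      by_cases h : T = S₀
      · subst h
        simp only [hf, if_pos rfl]
        simp
      · simp only [hf, if_neg h]
        tauto
    rw [herase, Finset.card_erase_of_mem hS₀mem]
    have : 0 < (diffs 𝒮 u v).card := Finset.card_pos.2 hne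
    omega

lemma exists_walk (h𝒮 : IsSplitSystem X 𝒮) (u v : BunemanVertex 𝒮) :
    ∃ p : (BunemanGraph 𝒮).Walk u v, p.length = (diffs 𝒮 u v).card := by
  generalize hn : (diffs 𝒮 u v).card = n
  induction n generalizing u with
  | zero =>
    have huv : u = v := by
      apply Subtype.ext; funext S
      by_contra hS
      have hmem : S ∈ diffs 𝒮 u v := mem_diffs.2 hS
      rw [Finset.card_eq_zero] at hn
      simp [hn] at hmem
    subst huv
    exact ⟨.nil, by simp [hn]⟩
  | succ n ih =>
    have hne : (diffs 𝒮 u v).Nonempty := Finset.card_pos.1 (by omega)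
    obtain ⟨u', hadj, hcard⟩ := exists_flip h𝒮 hne
    obtain ⟨p, hp⟩ := ih u' (by omega)
    refine ⟨.cons hadj p, ?_⟩
    simp only [SimpleGraph.Walk.length_cons]
    omega

lemma dist_eq_card_diffs (h𝒮 : IsSplitSystem X 𝒮) (u v : BunemanVertex 𝒮) :
    (BunemanGraph 𝒮).dist u v = (diffs 𝒮 u v).card := by
  obtain ⟨p, hp⟩ := exists_walk h𝒮 u v
  refine le_antisymm (hp ▸ SimpleGraph.dist_le p) ?_
  obtain ⟨q, hq⟩ := SimpleGraph.Reachable.exists_walk_length_eq_dist ⟨p⟩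
  exact hq ▸ card_diffs_le_walk_length q

lemma two_le_card {a b : α} {T : Finset α} (hab : a ≠ b) (ha : a ∈ T) (hb : b ∈ T) :
    2 ≤ T.card :=
  Finset.one_lt_card.2 ⟨a, ha, b, hb, hab⟩

lemma two_missing {Y P : Finset α} {a b : α} (ha : a ∈ Y) (hb : b ∈ Y) (hab : a ≠ b)
    (haP : a ∉ P) (hbP : b ∉ P) (hY : Y.card = 3) : ¬ 2 ≤ (Y ∩ P).card := by
  intro h
  have hsub : Y ∩ P ⊆ Y \ {a, b} := by
    intro t ht
    rw [Finset.mem_inter] at ht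
    rw [Finset.mem_sdiff, Finset.mem_insert, Finset.mem_singleton]
    refine ⟨ht.1, ?_⟩
    rintro (rfl | rfl)
    exacts [haP ht.2, hbP ht.2]
  have h2 : ({a, b} : Finset α) ⊆ Y := by
    intro t ht
    rw [Finset.mem_insert, Finset.mem_singleton] at ht
    rcases ht with rfl | rfl
    exacts [ha, hb]
  have h3 := Finset.card_le_card hsub
  rw [Finset.card_sdiff_of_subset h2] at h3
  have hab2 : ({a, b} : Finset α).card = 2 := by
    rw [Finset.card_insert_of_notMem (by simp [hab]), Finset.card_singleton]
  omega

lemma maj_inter_nonempty {Y A B : Finset α} (hY : Y.card = 3)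
    (hA : 2 ≤ (Y ∩ A).card) (hB : 2 ≤ (Y ∩ B).card) : (A ∩ B).Nonempty := by
  have h1 := Finset.card_union_add_card_inter (Y ∩ A) (Y ∩ B)
  have h2 : (Y ∩ A) ∪ (Y ∩ B) ⊆ Y :=
    Finset.union_subset Finset.inter_subset_left Finset.inter_subset_left
  have h3 := Finset.card_le_card h2
  have h4 : (Y ∩ A) ∩ (Y ∩ B) ⊆ A ∩ B := by
    intro t ht
    simp only [Finset.mem_inter] at ht ⊢
    exact ⟨ht.1.2, ht.2.2⟩
  have h5 : 0 < ((Y ∩ A) ∩ (Y ∩ B)).card := by omega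
  exact (Finset.card_pos.1 h5).mono h4

lemma maj_unique {S : Finset (Finset α)} (hS : IsSplit X S) {Y P Q : Finset α}
    (hY : Y.card = 3) (hP : P ∈ S) (hQ : Q ∈ S)
    (h2P : 2 ≤ (Y ∩ P).card) (h2Q : 2 ≤ (Y ∩ Q).card) : P = Q := by
  by_contra hne
  have hd := parts_disjoint hS hP hQ hne
  have := maj_inter_nonempty hY h2P h2Q
  rw [hd] at this
  exact Finset.not_nonempty_empty this

lemma leaf_eq_iff (h𝒮 : IsSplitSystem X 𝒮) {φ m : BunemanVertex 𝒮} {a : α}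
    (hφ : ∀ S, a ∈ φ.1 S) (S : {S // S ∈ 𝒮}) : φ.1 S = m.1 S ↔ a ∈ m.1 S :=
  ⟨fun h => h ▸ hφ S,
   fun h => part_eq_of_mem (h𝒮.1 S.1 S.2) (φ.2.1 S) (m.2.1 S) (hφ S) h⟩

lemma pointwise_of_median_eq (h𝒮 : IsSplitSystem X 𝒮) {φa φb m' : BunemanVertex 𝒮}
    (h : (BunemanGraph 𝒮).dist φa m' + (BunemanGraph 𝒮).dist m' φb =
      (BunemanGraph 𝒮).dist φa φb) :
    ∀ S, m'.1 S = φa.1 S ∨ m'.1 S = φb.1 S := by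
  rw [dist_eq_card_diffs h𝒮, dist_eq_card_diffs h𝒮, dist_eq_card_diffs h𝒮] at h
  have hsub : diffs 𝒮 φa φb ⊆ diffs 𝒮 φa m' ∪ diffs 𝒮 m' φb := by
    intro S hS
    rw [mem_diffs] at hS
    rw [Finset.mem_union, mem_diffs, mem_diffs]
    by_contra hc
    push_neg at hc
    exact hS (hc.1.trans hc.2)
  have hc := Finset.card_union_add_card_inter (diffs 𝒮 φa m') (diffs 𝒮 m' φb)
  have hle := Finset.card_le_card hsub
  have hinter : (diffs 𝒮 φa m' ∩ diffs 𝒮 m' φb).card = 0 := by omega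
  rw [Finset.card_eq_zero] at hinter
  intro S
  by_contra hcon
  push_neg at hcon
  have : S ∈ diffs 𝒮 φa m' ∩ diffs 𝒮 m' φb :=
    Finset.mem_inter.2 ⟨mem_diffs.2 (Ne.symm hcon.1), mem_diffs.2 hcon.2⟩
  simp [hinter] at this

end Aux

/-- For a split system `𝒮` on `X` (`|X| ≥ 3`) and distinct `x,y,z ∈ X`,
the map `ψ` assigning to each split `S ∈ 𝒮` the part of `S` containing at least two
elements of `{x,y,z}` is a vertex of the Buneman graph `B(𝒮)`, and it is the unique
median in `B(𝒮)` of the leaves `φ_x`, `φ_y`, `φ_z`. -/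
theorem statement0 (X : Finset α) (hX : 3 ≤ X.card)
    (𝒮 : Finset (Finset (Finset α))) (h𝒮 : IsSplitSystem X 𝒮)
    (x y z : α) (hx : x ∈ X) (hy : y ∈ X) (hz : z ∈ X)
    (hxy : x ≠ y) (hxz : x ≠ z) (hyz : y ≠ z)
    (φx φy φz : BunemanVertex 𝒮)
    (hφx : ∀ S : {S // S ∈ 𝒮}, x ∈ φx.1 S)
    (hφy : ∀ S : {S // S ∈ 𝒮}, y ∈ φy.1 S)
    (hφz : ∀ S : {S // S ∈ 𝒮}, z ∈ φz.1 S) :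
    (∃ m : BunemanVertex 𝒮,
        ∀ S : {S // S ∈ 𝒮}, 2 ≤ (({x, y, z} : Finset α) ∩ m.1 S).card) ∧
    ∀ m : BunemanVertex 𝒮,
      (∀ S : {S // S ∈ 𝒮}, 2 ≤ (({x, y, z} : Finset α) ∩ m.1 S).card) →
        IsMedian (BunemanGraph 𝒮) φx φy φz m ∧
        ∀ m' : BunemanVertex 𝒮, IsMedian (BunemanGraph 𝒮) φx φy φz m' → m' = m := by
  classical
  set Y : Finset α := {x, y, z} with hY
  have hY3 : Y.card = 3 := by
    rw [hY, Finset.card_insert_of_notMem (by simp [hxy, hxz]),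
        Finset.card_insert_of_notMem (by simp [hyz]), Finset.card_singleton]
  have hxY : x ∈ Y := by simp [hY]
  have hyY : y ∈ Y := by simp [hY]
  have hzY : z ∈ Y := by simp [hY]
  -- construction of the majority vertex ψ
  have hB1ψ : ∀ S : {S // S ∈ 𝒮}, (if y ∈ φx.1 S then φx.1 S else φz.1 S) ∈ S.1 := by
    intro S
    by_cases h : y ∈ φx.1 S
    · rw [if_pos h]; exact φx.2.1 S
    · rw [if_neg h]; exact φz.2.1 S
  have hmajψ : ∀ S : {S // S ∈ 𝒮},
      2 ≤ (Y ∩ (if y ∈ φx.1 S then φx.1 S else φz.1 S)).card := by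
    intro S
    have hSsplit : IsSplit X S.1 := h𝒮.1 S.1 S.2
    by_cases hyS : y ∈ φx.1 S
    · rw [if_pos hyS]
      exact two_le_card hxy (Finset.mem_inter.2 ⟨hxY, hφx S⟩)
        (Finset.mem_inter.2 ⟨hyY, hyS⟩)
    · rw [if_neg hyS]
      by_cases hzS : z ∈ φx.1 S
      · have heq : φz.1 S = φx.1 S :=
          part_eq_of_mem hSsplit (φz.2.1 S) (φx.2.1 S) (hφz S) hzS
        refine two_le_card hxz (Finset.mem_inter.2 ⟨hxY, ?_⟩)
          (Finset.mem_inter.2 ⟨hzY, hφz S⟩)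
        rw [heq]; exact hφx S
      · have hne : φx.1 S ≠ φz.1 S := by
          intro h
          apply hzS
          rw [h]; exact hφz S
        have hzother : φz.1 S = X \ φx.1 S :=
          other_part hSsplit (φx.2.1 S) (φz.2.1 S) hne
        have hyin : y ∈ φz.1 S := by
          rw [hzother, Finset.mem_sdiff]; exact ⟨hy, hyS⟩
        exact two_le_card hyz (Finset.mem_inter.2 ⟨hyY, hyin⟩)
          (Finset.mem_inter.2 ⟨hzY, hφz S⟩)
  have hB2ψ : ∀ S S' : {S // S ∈ 𝒮}, S ≠ S' →
      ((if y ∈ φx.1 S then φx.1 S else φz.1 S) ∩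
        (if y ∈ φx.1 S' then φx.1 S' else φz.1 S')).Nonempty :=
    fun S S' _ => maj_inter_nonempty hY3 (hmajψ S) (hmajψ S')
  refine ⟨⟨⟨fun S => if y ∈ φx.1 S then φx.1 S else φz.1 S, hB1ψ, hB2ψ⟩, hmajψ⟩, ?_⟩
  intro m hm
  have hmaj_mem : ∀ (a b : α), a ∈ Y → b ∈ Y → a ≠ b →
      ∀ S : {S // S ∈ 𝒮}, a ∉ m.1 S → b ∈ m.1 S := by
    intro a b ha hb hab S haS
    by_contra hbS
    exact two_missing ha hb hab haS hbS hY3 (hm S)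
  have pairdist : ∀ (a b : α) (φa φb : BunemanVertex 𝒮), a ∈ Y → b ∈ Y → a ≠ b →
      (∀ S, a ∈ φa.1 S) → (∀ S, b ∈ φb.1 S) →
      (BunemanGraph 𝒮).dist φa m + (BunemanGraph 𝒮).dist m φb =
        (BunemanGraph 𝒮).dist φa φb := by
    intro a b φa φb haY hbY hab hφa hφb
    rw [dist_eq_card_diffs h𝒮, dist_eq_card_diffs h𝒮, dist_eq_card_diffs h𝒮]
    have hunion : diffs 𝒮 φa m ∪ diffs 𝒮 m φb = diffs 𝒮 φa φb := by
      ext S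
      rw [Finset.mem_union, mem_diffs, mem_diffs, mem_diffs]
      constructor
      · rintro (h | h)
        · have haS : a ∉ m.1 S := fun hmem => h ((leaf_eq_iff h𝒮 hφa S).2 hmem)
          have hbS : b ∈ m.1 S := hmaj_mem a b haY hbY hab S haS
          have hbm : φb.1 S = m.1 S := (leaf_eq_iff h𝒮 hφb S).2 hbS
          exact fun he => h (he.trans hbm)
        · have hbS : b ∉ m.1 S := fun hmem =>
            h (((leaf_eq_iff h𝒮 hφb S).2 hmem).symm)
          have haS : a ∈ m.1 S := hmaj_mem b a hbY haY hab.symm S hbS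
          have hma : φa.1 S = m.1 S := (leaf_eq_iff h𝒮 hφa S).2 haS
          exact fun he => h (hma.symm.trans he)
      · intro h
        by_contra hc
        push_neg at hc
        exact h (hc.1.trans hc.2)
    have hdisj : Disjoint (diffs 𝒮 φa m) (diffs 𝒮 m φb) := by
      rw [Finset.disjoint_left]
      intro S h1 h2
      rw [mem_diffs] at h1 h2
      have haS : a ∉ m.1 S := fun hmem => h1 ((leaf_eq_iff h𝒮 hφa S).2 hmem)
      have hbS : b ∉ m.1 S := fun hmem => h2 (((leaf_eq_iff h𝒮 hφb S).2 hmem).symm)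
      exact two_missing haY hbY hab haS hbS hY3 (hm S)
    rw [← hunion, Finset.card_union_of_disjoint hdisj]
  constructor
  · exact ⟨pairdist x y φx φy hxY hyY hxy hφx hφy,
      pairdist y z φy φz hyY hzY hyz hφy hφz,
      pairdist x z φx φz hxY hzY hxz hφx hφz⟩
  · intro m' hmed
    obtain ⟨h1, h2, h3⟩ := hmed
    have pxy := pointwise_of_median_eq h𝒮 h1
    have pyz := pointwise_of_median_eq h𝒮 h2
    have pxz := pointwise_of_median_eq h𝒮 h3
    have hxin : ∀ {a : α} {φa : BunemanVertex 𝒮} (S : {S // S ∈ 𝒮}),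
        (∀ T, a ∈ φa.1 T) → m'.1 S = φa.1 S → a ∈ m'.1 S := by
      intro a φa S hφa h
      rw [h]; exact hφa S
    have hm' : ∀ S : {S // S ∈ 𝒮}, 2 ≤ (Y ∩ m'.1 S).card := by
      intro S
      rcases pxy S with h1' | h1'
      · rcases pyz S with h2' | h2'
        · exact two_le_card hxy (Finset.mem_inter.2 ⟨hxY, hxin S hφx h1'⟩)
            (Finset.mem_inter.2 ⟨hyY, hxin S hφy h2'⟩)
        · exact two_le_card hxz (Finset.mem_inter.2 ⟨hxY, hxin S hφx h1'⟩)
            (Finset.mem_inter.2 ⟨hzY, hxin S hφz h2'⟩)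
      · rcases pxz S with h2' | h2'
        · exact two_le_card hxy (Finset.mem_inter.2 ⟨hxY, hxin S hφx h2'⟩)
            (Finset.mem_inter.2 ⟨hyY, hxin S hφy h1'⟩)
        · exact two_le_card hyz (Finset.mem_inter.2 ⟨hyY, hxin S hφy h1'⟩)
            (Finset.mem_inter.2 ⟨hzY, hxin S hφz h2'⟩)
    apply Subtype.ext; funext S
    exact maj_unique (h𝒮.1 S.1 S.2) hY3 (m'.2.1 S) (m.2.1 S) (hm' S) (hm S)

end InjectiveSplitSystems
end

section
/- Let 𝒮 be a split system on a finite set X with |X| ≥ 4. If 𝒮 contains all 2-splits of X, then 𝒮 is injective. -/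
namespace InjectiveSplitSystems

open Finset

variable {α : Type*} [DecidableEq α]

/-- A split system on `X` (`|X| ≥ 4`) containing all 2-splits of `X`
is injective. -/
theorem statement1 (X : Finset α) (hX : 4 ≤ X.card)
    (𝒮 : Finset (Finset (Finset α))) (h𝒮 : IsSplitSystem X 𝒮)
    (h2 : ∀ A : Finset α, A ⊆ X → A.card = 2 → ({A, X \ A} : Finset (Finset α)) ∈ 𝒮) :
    IsInjective X 𝒮 := by
  intro Y Y' hY hY' hYc hY'c hne
  obtain ⟨y, hyY, hyY'⟩ : ∃ y ∈ Y, y ∉ Y' := by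
    by_contra h
    push_neg at h
    exact hne (Finset.eq_of_subset_of_card_le h (by omega))
  obtain ⟨z, hz⟩ : (Y \ {y}).Nonempty := by
    rw [Finset.sdiff_nonempty]
    intro hsub
    have := Finset.card_le_card hsub
    simp at this; omega
  rw [Finset.mem_sdiff, Finset.mem_singleton] at hz
  obtain ⟨hzY, hzy⟩ := hz
  set A : Finset α := {y, z} with hA
  have hAY : A ⊆ Y := by
    intro a ha
    simp only [hA, Finset.mem_insert, Finset.mem_singleton] at ha
    rcases ha with rfl | rfl <;> assumption
  have hAX : A ⊆ X := hAY.trans hY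
  have hAcard : A.card = 2 := by
    rw [hA, Finset.card_insert_of_notMem (by simp [Ne.symm hzy]), Finset.card_singleton]
  refine ⟨{A, X \ A}, h2 A hAX hAcard, A, by simp, X \ A, by simp, ?_, ?_, ?_⟩
  · intro h
    have hy : y ∈ X \ A := h ▸ (by simp [hA] : y ∈ A)
    simp [hA] at hy
  · rw [Finset.inter_eq_right.mpr hAY, hAcard]
  · have hsub : Y' \ A ⊆ Y' ∩ (X \ A) := by
      intro a ha
      simp only [Finset.mem_sdiff, Finset.mem_inter] at ha ⊢
      exact ⟨ha.1, hY' ha.1, ha.2⟩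
    have h1 : (Y' ∩ A).card ≤ 1 := by
      have hss : Y' ∩ A ⊆ {z} := by
        intro a ha
        simp only [hA, Finset.mem_inter, Finset.mem_insert, Finset.mem_singleton] at ha ⊢
        rcases ha.2 with rfl | rfl
        · exact absurd ha.1 hyY'
        · rfl
      simpa using Finset.card_le_card hss
    have h2' := Finset.card_sdiff_add_card_inter Y' A
    have : 2 ≤ (Y' \ A).card := by omega
    exact le_trans this (Finset.card_le_card hsub)

end InjectiveSplitSystems
end

section
/- Let 𝒮 be a split system on a finite set X with |X| ≥ 4. If 𝒮 is maximal circular, then 𝒮 is injective. -/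
namespace InjectiveSplitSystems

open Finset

variable {α : Type*} [DecidableEq α]

private lemma sorted3 (P : Finset ℕ) (h : P.card = 3) :
    ∃ a b c : ℕ, a < b ∧ b < c ∧ P = {a, b, c} := by
  obtain ⟨a, b, c, hab, hac, hbc, rfl⟩ := Finset.card_eq_three.mp h
  rcases Nat.lt_trichotomy a b with h1 | h1 | h1
  · rcases Nat.lt_trichotomy b c with h2 | h2 | h2
    · exact ⟨a, b, c, h1, h2, rfl⟩
    · exact absurd h2 hbc
    · rcases Nat.lt_trichotomy a c with h3 | h3 | h3
      · exact ⟨a, c, b, h3, h2, by ext t; simp; tauto⟩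
      · exact absurd h3 hac
      · exact ⟨c, a, b, h3, h1, by ext t; simp; tauto⟩
  · exact absurd h1 hab
  · rcases Nat.lt_trichotomy a c with h2 | h2 | h2
    · exact ⟨b, a, c, h1, h2, by ext t; simp; tauto⟩
    · exact absurd h2 hac
    · rcases Nat.lt_trichotomy b c with h3 | h3 | h3
      · exact ⟨b, c, a, h3, h2, by ext t; simp; tauto⟩
      · exact absurd h3 hbc
      · exact ⟨c, b, a, h3, h1, by ext t; simp; tauto⟩

private lemma card_pair_le {P : Finset ℕ} {x y : ℕ} (h : x ≠ y) (hs : ({x, y} : Finset ℕ) ⊆ P) :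
    2 ≤ P.card := by
  have h2 : ({x, y} : Finset ℕ).card = 2 := by
    rw [Finset.card_insert_of_notMem (by simpa using h), Finset.card_singleton]
  exact h2 ▸ Finset.card_le_card hs

private lemma card_le_one {P : Finset ℕ} {x : ℕ} (hs : P ⊆ {x}) : P.card ≤ 1 := by
  simpa using Finset.card_le_card hs

private lemma core {n a b c d e g : ℕ} (hab : a < b) (hbc : b < c)
    (hde : d < e) (heg : e < g) (ha : 1 ≤ a) (hc : c ≤ n) (hd : 1 ≤ d) (hg : g ≤ n)
    (hne : ¬ (a = d ∧ b = e ∧ c = g)) :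
    ∃ i j, 1 ≤ i ∧ i ≤ j ∧ j ≤ n ∧ (∃ m, 1 ≤ m ∧ m ≤ n ∧ ¬ (i ≤ m ∧ m ≤ j)) ∧
      ((2 ≤ (({a,b,c} : Finset ℕ) ∩ Icc i j).card ∧ (({d,e,g} : Finset ℕ) ∩ Icc i j).card ≤ 1) ∨
       ((({a,b,c} : Finset ℕ) ∩ Icc i j).card ≤ 1 ∧ 2 ≤ (({d,e,g} : Finset ℕ) ∩ Icc i j).card)) := by
  by_cases hbe : b = e
  · by_cases had : a = d
    · have hcg : c ≠ g := fun hh => hne ⟨had, hbe, hh⟩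
      rcases Nat.lt_or_ge c g with h | h
      · refine ⟨b, c, by omega, le_of_lt hbc, by omega, ⟨g, by omega, hg, by omega⟩, Or.inl ⟨?_, ?_⟩⟩
        · exact card_pair_le (Nat.ne_of_lt hbc)
            (by intro t ht; simp only [mem_insert, mem_singleton, mem_inter, mem_Icc] at ht ⊢; omega)
        · exact card_le_one (x := e)
            (by intro t ht; simp only [mem_insert, mem_singleton, mem_inter, mem_Icc] at ht ⊢; omega)
      · refine ⟨e, g, by omega, le_of_lt heg, by omega, ⟨c, by omega, hc, by omega⟩, Or.inr ⟨?_, ?_⟩⟩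
        · exact card_le_one (x := b)
            (by intro t ht; simp only [mem_insert, mem_singleton, mem_inter, mem_Icc] at ht ⊢; omega)
        · exact card_pair_le (Nat.ne_of_lt heg)
            (by intro t ht; simp only [mem_insert, mem_singleton, mem_inter, mem_Icc] at ht ⊢; omega)
    · rcases Nat.lt_or_ge d a with h | h
      · refine ⟨a, b, ha, le_of_lt hab, by omega, ⟨g, by omega, hg, by omega⟩, Or.inl ⟨?_, ?_⟩⟩
        · exact card_pair_le (Nat.ne_of_lt hab)
            (by intro t ht; simp only [mem_insert, mem_singleton, mem_inter, mem_Icc] at ht ⊢; omega)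
        · exact card_le_one (x := e)
            (by intro t ht; simp only [mem_insert, mem_singleton, mem_inter, mem_Icc] at ht ⊢; omega)
      · have had' : a < d := by omega
        refine ⟨d, e, hd, le_of_lt hde, by omega, ⟨c, by omega, hc, by omega⟩, Or.inr ⟨?_, ?_⟩⟩
        · exact card_le_one (x := b)
            (by intro t ht; simp only [mem_insert, mem_singleton, mem_inter, mem_Icc] at ht ⊢; omega)
        · exact card_pair_le (Nat.ne_of_lt hde)
            (by intro t ht; simp only [mem_insert, mem_singleton, mem_inter, mem_Icc] at ht ⊢; omega)
  · rcases Nat.lt_or_ge b e with h | h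
    · refine ⟨1, b, le_refl 1, by omega, by omega, ⟨g, by omega, hg, by omega⟩, Or.inl ⟨?_, ?_⟩⟩
      · exact card_pair_le (Nat.ne_of_lt hab)
          (by intro t ht; simp only [mem_insert, mem_singleton, mem_inter, mem_Icc] at ht ⊢; omega)
      · exact card_le_one (x := d)
          (by intro t ht; simp only [mem_insert, mem_singleton, mem_inter, mem_Icc] at ht ⊢; omega)
    · have h' : e < b := by omega
      refine ⟨1, e, le_refl 1, by omega, by omega, ⟨c, by omega, hc, by omega⟩, Or.inr ⟨?_, ?_⟩⟩
      · exact card_le_one (x := a)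
          (by intro t ht; simp only [mem_insert, mem_singleton, mem_inter, mem_Icc] at ht ⊢; omega)
      · exact card_pair_le (Nat.ne_of_lt hde)
          (by intro t ht; simp only [mem_insert, mem_singleton, mem_inter, mem_Icc] at ht ⊢; omega)

/-- A maximal circular split system on `X` (`|X| ≥ 4`) is injective. -/
theorem statement2 (X : Finset α) (hX : 4 ≤ X.card)
    (𝒮 : Finset (Finset (Finset α))) (h𝒮 : IsSplitSystem X 𝒮)
    (hmax : IsMaximalCircular X 𝒮) :
    IsInjective X 𝒮 := by
  classical
  obtain ⟨⟨f, hinj, himg, hform⟩, hmaxi⟩ := hmax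
  set n := X.card with hn
  -- every interval split is in 𝒮, by maximality
  have himgsub : ∀ i j : ℕ, 1 ≤ i → j ≤ n → (Icc i j).image f ⊆ X := by
    intro i j hi hj x hx
    obtain ⟨k, hk, rfl⟩ := Finset.mem_image.mp hx
    rw [Finset.mem_Icc] at hk
    rw [← himg]
    exact Finset.mem_image_of_mem f (Finset.mem_Icc.mpr ⟨by omega, by omega⟩)
  have key : ∀ i j : ℕ, 1 ≤ i → i ≤ j → j ≤ n → (Icc i j).image f ≠ X →
      ({(Icc i j).image f, X \ (Icc i j).image f} : Finset (Finset α)) ∈ 𝒮 := by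
    intro i j hi hij hjn hIX
    set 𝒮' : Finset (Finset (Finset α)) :=
      ((Icc 1 n ×ˢ Icc 1 n).filter fun p =>
        p.1 ≤ p.2 ∧ (Icc p.1 p.2).image f ≠ X).image
        (fun p => ({(Icc p.1 p.2).image f, X \ (Icc p.1 p.2).image f} : Finset (Finset α)))
      with h𝒮'
    have hmem' : ∀ i' j' : ℕ, 1 ≤ i' → i' ≤ j' → j' ≤ n → (Icc i' j').image f ≠ X →
        ({(Icc i' j').image f, X \ (Icc i' j').image f} : Finset (Finset α)) ∈ 𝒮' := by
      intro i' j' h1 h2 h3 h4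
      refine Finset.mem_image.mpr ⟨(i', j'), Finset.mem_filter.mpr ⟨?_, h2, h4⟩, rfl⟩
      exact Finset.mem_product.mpr ⟨Finset.mem_Icc.mpr ⟨h1, by omega⟩, Finset.mem_Icc.mpr ⟨by omega, h3⟩⟩
    have hsplit' : ∀ S ∈ 𝒮', IsSplit X S := by
      intro S hS
      obtain ⟨p, hp, rfl⟩ := Finset.mem_image.mp hS
      obtain ⟨hpmem, hple, hpne⟩ := Finset.mem_filter.mp hp
      obtain ⟨hp1, hp2⟩ := Finset.mem_product.mp hpmem
      rw [Finset.mem_Icc] at hp1 hp2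
      have hsub := himgsub p.1 p.2 hp1.1 hp2.2
      refine ⟨(Icc p.1 p.2).image f, X \ (Icc p.1 p.2).image f, rfl,
        Finset.union_sdiff_of_subset hsub, Finset.inter_sdiff_self _ _, ?_, ?_⟩
      · intro hempty
        have : p.1 ∈ Icc p.1 p.2 := Finset.mem_Icc.mpr ⟨le_refl _, hple⟩
        have : f p.1 ∈ (Icc p.1 p.2).image f := Finset.mem_image_of_mem f this
        rw [hempty] at this
        exact absurd this (Finset.notMem_empty _)
      · intro hempty
        obtain ⟨x, hxX, hxI⟩ := Finset.exists_of_ssubset (lt_of_le_of_ne hsub hpne)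
        have : x ∈ X \ (Icc p.1 p.2).image f := Finset.mem_sdiff.mpr ⟨hxX, hxI⟩
        rw [hempty] at this
        exact absurd this (Finset.notMem_empty _)
    have htriv' : ∀ x ∈ X, ({{x}, X \ {x}} : Finset (Finset α)) ∈ 𝒮' := by
      intro x hx
      rw [← himg] at hx
      obtain ⟨k, hk, rfl⟩ := Finset.mem_image.mp hx
      rw [Finset.mem_Icc] at hk
      have himg1 : (Icc k k).image f = {f k} := by rw [Finset.Icc_self, Finset.image_singleton]
      have hne1 : (Icc k k).image f ≠ X := by
        rw [himg1]
        intro hEq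
        have : X.card = 1 := by rw [← hEq]; exact Finset.card_singleton _
        omega
      have := hmem' k k hk.1 (le_refl k) hk.2 hne1
      rwa [himg1] at this
    have hcirc' : IsCircular X 𝒮' := by
      refine ⟨f, hinj, himg, ?_⟩
      intro S hS
      obtain ⟨p, hp, rfl⟩ := Finset.mem_image.mp hS
      obtain ⟨hpmem, hple, hpne⟩ := Finset.mem_filter.mp hp
      obtain ⟨hp1, hp2⟩ := Finset.mem_product.mp hpmem
      rw [Finset.mem_Icc] at hp1 hp2
      exact ⟨p.1, p.2, hp1.1, hple, hp2.2, rfl⟩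
    have hsub' : 𝒮 ⊆ 𝒮' := by
      intro S hS
      obtain ⟨i', j', h1, h2, h3, hSeq⟩ := hform S hS
      have hne' : (Icc i' j').image f ≠ X := by
        intro hEq
        obtain ⟨A, B, hAB, hU, hI, hA, hB⟩ := h𝒮.1 S hS
        have hemp : (∅ : Finset α) ∈ S := by
          rw [hSeq, hEq, Finset.sdiff_self]
          exact Finset.mem_insert.mpr (Or.inr (Finset.mem_singleton_self _))
        rw [hAB] at hemp
        rcases Finset.mem_insert.mp hemp with h | h
        · exact hA h.symm
        · exact hB (Finset.mem_singleton.mp h).symm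
      rw [hSeq]
      exact hmem' i' j' h1 h2 h3 hne'
    have hEq𝒮 : 𝒮' = 𝒮 := hmaxi 𝒮' ⟨hsplit', htriv'⟩ hcirc' hsub'
    rw [← hEq𝒮]
    exact hmem' i j hi hij hjn hIX
  -- injectivity
  intro Y Y' hYX hY'X hY3 hY'3 hneYY
  have hPimg : ∀ Z : Finset α, Z ⊆ X → ((Icc 1 n).filter fun k => f k ∈ Z).image f = Z := by
    intro Z hZ
    ext y
    constructor
    · intro hy
      obtain ⟨k, hk, rfl⟩ := Finset.mem_image.mp hy
      exact (Finset.mem_filter.mp hk).2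
    · intro hy
      have : y ∈ X := hZ hy
      rw [← himg] at this
      obtain ⟨k, hk, rfl⟩ := Finset.mem_image.mp this
      exact Finset.mem_image_of_mem f (Finset.mem_filter.mpr ⟨hk, hy⟩)
  have hPcard : ∀ Z : Finset α, Z ⊆ X → Z.card = 3 →
      ((Icc 1 n).filter fun k => f k ∈ Z).card = 3 := by
    intro Z hZ hZ3
    rw [← Finset.card_image_of_injOn (hinj.mono (by exact_mod_cast Finset.filter_subset _ _)),
      hPimg Z hZ, hZ3]
  have hint : ∀ (Z : Finset α), Z ⊆ X → ∀ i j : ℕ, 1 ≤ i → j ≤ n →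
      (Z ∩ (Icc i j).image f).card = (((Icc 1 n).filter fun k => f k ∈ Z) ∩ Icc i j).card := by
    intro Z hZ i j hi hj
    have hEq : Z ∩ (Icc i j).image f
        = (((Icc 1 n).filter fun k => f k ∈ Z) ∩ Icc i j).image f := by
      ext y
      constructor
      · intro hy
        obtain ⟨hyZ, hyI⟩ := Finset.mem_inter.mp hy
        obtain ⟨k, hk, rfl⟩ := Finset.mem_image.mp hyI
        rw [Finset.mem_Icc] at hk
        refine Finset.mem_image_of_mem f (Finset.mem_inter.mpr
          ⟨Finset.mem_filter.mpr ⟨Finset.mem_Icc.mpr ⟨by omega, by omega⟩, hyZ⟩,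
           Finset.mem_Icc.mpr ⟨hk.1, hk.2⟩⟩)
      · intro hy
        obtain ⟨k, hk, rfl⟩ := Finset.mem_image.mp hy
        obtain ⟨hk1, hk2⟩ := Finset.mem_inter.mp hk
        exact Finset.mem_inter.mpr ⟨(Finset.mem_filter.mp hk1).2, Finset.mem_image_of_mem f hk2⟩
    rw [hEq]
    exact Finset.card_image_of_injOn (hinj.mono (by
      intro t ht
      simp only [Finset.coe_inter, Set.mem_inter_iff, Finset.mem_coe, Finset.mem_filter] at ht
      exact Finset.mem_coe.mpr ht.1.1))
  have hsdiff : ∀ (Z : Finset α), Z ⊆ X → ∀ I : Finset α,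
      (Z ∩ (X \ I)).card = Z.card - (Z ∩ I).card := by
    intro Z hZ I
    have h1 : Z ∩ (X \ I) = Z \ I := by
      ext y
      simp only [Finset.mem_inter, Finset.mem_sdiff]
      exact ⟨fun h => ⟨h.1, h.2.2⟩, fun h => ⟨h.1, hZ h.1, h.2⟩⟩
    rw [h1, ← Finset.card_inter_add_card_sdiff Z I]
    omega
  set P := (Icc 1 n).filter fun k => f k ∈ Y with hP
  set P' := (Icc 1 n).filter fun k => f k ∈ Y' with hP'
  obtain ⟨a, b, c, hab, hbc, hPeq⟩ := sorted3 P (hPcard Y hYX hY3)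
  obtain ⟨d, e, g, hde, heg, hP'eq⟩ := sorted3 P' (hPcard Y' hY'X hY'3)
  have hamem : a ∈ Icc 1 n := Finset.filter_subset _ _ (hPeq ▸ (by simp : a ∈ ({a,b,c} : Finset ℕ)))
  have hcmem : c ∈ Icc 1 n := Finset.filter_subset _ _ (hPeq ▸ (by simp : c ∈ ({a,b,c} : Finset ℕ)))
  have hdmem : d ∈ Icc 1 n := Finset.filter_subset _ _ (hP'eq ▸ (by simp : d ∈ ({d,e,g} : Finset ℕ)))
  have hgmem : g ∈ Icc 1 n := Finset.filter_subset _ _ (hP'eq ▸ (by simp : g ∈ ({d,e,g} : Finset ℕ)))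
  rw [Finset.mem_Icc] at hamem hcmem hdmem hgmem
  have hnePP : ¬ (a = d ∧ b = e ∧ c = g) := by
    rintro ⟨rfl, rfl, rfl⟩
    apply hneYY
    rw [← hPimg Y hYX, ← hPimg Y' hY'X, ← hP, ← hP', hPeq, hP'eq]
  obtain ⟨i, j, hi, hij, hjn, ⟨m, hm1, hmn, hmout⟩, hcase⟩ :=
    core hab hbc hde heg hamem.1 hcmem.2 hdmem.1 hgmem.2 hnePP
  set I : Finset α := (Icc i j).image f with hI
  have hIX : I ≠ X := by
    intro hEq
    have hmX : f m ∈ X := by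
      rw [← himg]; exact Finset.mem_image_of_mem f (Finset.mem_Icc.mpr ⟨hm1, hmn⟩)
    rw [← hEq] at hmX
    obtain ⟨k, hk, hfk⟩ := Finset.mem_image.mp hmX
    rw [Finset.mem_Icc] at hk
    have hkm : m = k := hinj (Finset.mem_coe.mpr (Finset.mem_Icc.mpr ⟨hm1, hmn⟩))
      (Finset.mem_coe.mpr (Finset.mem_Icc.mpr ⟨by omega, by omega⟩)) hfk.symm
    omega
  have hSmem := key i j hi hij hjn hIX
  have htne : I ≠ X \ I := by
    intro hEq
    have h1 : f i ∈ I := Finset.mem_image_of_mem f (Finset.mem_Icc.mpr ⟨le_refl i, hij⟩)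
    have h2 := h1
    rw [hEq] at h2
    exact (Finset.mem_sdiff.mp h2).2 h1
  have hYI : (Y ∩ I).card = (P ∩ Icc i j).card := hint Y hYX i j hi hjn
  have hY'I : (Y' ∩ I).card = (P' ∩ Icc i j).card := hint Y' hY'X i j hi hjn
  rw [hPeq] at hYI
  rw [hP'eq] at hY'I
  refine ⟨_, hSmem, ?_⟩
  rcases hcase with ⟨h1, h2⟩ | ⟨h1, h2⟩
  · refine ⟨I, Finset.mem_insert_self _ _, X \ I,
      Finset.mem_insert.mpr (Or.inr (Finset.mem_singleton_self _)), htne, ?_, ?_⟩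
    · omega
    · have := hsdiff Y' hY'X I
      omega
  · refine ⟨X \ I, Finset.mem_insert.mpr (Or.inr (Finset.mem_singleton_self _)), I,
      Finset.mem_insert_self _ _, (Ne.symm htne), ?_, ?_⟩
    · have := hsdiff Y hYX I
      omega
    · omega

end InjectiveSplitSystems
end

section
/- Let X = {1, …, n} with n ≥ 5, and let 𝒮* be the split system on X consisting of all trivial splits together with all 2-splits xy|X−{x,y} with x, y ∈ X−{1}. Then 𝒮* is injective. -/
namespace InjectiveSplitSystems

open Finset

variable {α : Type*} [DecidableEq α]

lemma phiNe_symm {Y Y' : Finset α} {S : Finset (Finset α)} (h : phiNe Y Y' S) :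
    phiNe Y' Y S := by
  obtain ⟨t, ht, t', ht', hne, h1, h2⟩ := h
  exact ⟨t', ht', t, ht, hne.symm, h2, h1⟩

lemma key_lemma (n : ℕ) (𝒮 : Finset (Finset (Finset ℕ)))
    (h𝒮 : ∀ S : Finset (Finset ℕ), S ∈ 𝒮 ↔
      ((∃ x ∈ Finset.Icc 1 n, S = ({{x}, Finset.Icc 1 n \ {x}} : Finset (Finset ℕ))) ∨
       (∃ x ∈ Finset.Icc 1 n, ∃ y ∈ Finset.Icc 1 n, x ≠ 1 ∧ y ≠ 1 ∧ x ≠ y ∧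
         S = ({{x, y}, Finset.Icc 1 n \ {x, y}} : Finset (Finset ℕ)))))
    (Y Y' : Finset ℕ) (hY : Y ⊆ Finset.Icc 1 n) (hY' : Y' ⊆ Finset.Icc 1 n)
    (hcY : Y.card = 3) (hcY' : Y'.card = 3)
    (a : ℕ) (haY : a ∈ Y) (haY' : a ∉ Y') (ha1 : a ≠ 1) :
    ∃ S ∈ 𝒮, phiNe Y Y' S := by
  -- pick b ∈ Y with b ≠ 1, b ≠ a
  have hsub : 1 ≤ (Y \ ({1, a} : Finset ℕ)).card := by
    have := Finset.le_card_sdiff ({1, a} : Finset ℕ) Y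
    have h2 : ({1, a} : Finset ℕ).card ≤ 2 := Finset.card_insert_le _ _ |>.trans (by simp)
    omega
  obtain ⟨b, hb⟩ := Finset.card_pos.mp (by omega : 0 < (Y \ ({1, a} : Finset ℕ)).card)
  rw [Finset.mem_sdiff, Finset.mem_insert, Finset.mem_singleton] at hb
  obtain ⟨hbY, hb1a⟩ := hb
  push_neg at hb1a
  obtain ⟨hb1, hba⟩ := hb1a
  refine ⟨{{a, b}, Finset.Icc 1 n \ {a, b}}, ?_, ?_⟩
  · rw [h𝒮]
    exact Or.inr ⟨a, hY haY, b, hY hbY, ha1, hb1, fun h => hba h.symm, rfl⟩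
  · refine ⟨{a, b}, by simp, Finset.Icc 1 n \ {a, b}, by simp, ?_, ?_, ?_⟩
    · intro h
      have : a ∈ Finset.Icc 1 n \ ({a, b} : Finset ℕ) := h ▸ (by simp)
      simp at this
    · have hsub : ({a, b} : Finset ℕ) ⊆ Y := by
        intro x hx; rw [Finset.mem_insert, Finset.mem_singleton] at hx
        rcases hx with rfl | rfl <;> assumption
      rw [Finset.inter_eq_right.mpr hsub]
      rw [Finset.card_pair (fun h => hba h.symm)]
    · have heq : Y' ∩ (Finset.Icc 1 n \ ({a, b} : Finset ℕ)) = Y' \ {b} := by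
        ext x
        simp only [Finset.mem_inter, Finset.mem_sdiff, Finset.mem_insert,
          Finset.mem_singleton]
        constructor
        · rintro ⟨hx, -, h2⟩; push_neg at h2; exact ⟨hx, h2.2⟩
        · rintro ⟨hx, hxb⟩
          refine ⟨hx, hY' hx, ?_⟩
          push_neg
          exact ⟨fun h => haY' (h ▸ hx), hxb⟩
      rw [heq]
      have := Finset.le_card_sdiff ({b} : Finset ℕ) Y'
      simp only [Finset.card_singleton] at this
      omega

/-- For `X = {1, …, n}` with `n ≥ 5`, the split system consisting of
all trivial splits together with all 2-splits `xy | X − {x,y}` with `x, y ∈ X − {1}`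
is injective. -/
theorem statement4 (n : ℕ) (hn : 5 ≤ n) (𝒮 : Finset (Finset (Finset ℕ)))
    (h𝒮 : ∀ S : Finset (Finset ℕ), S ∈ 𝒮 ↔
      ((∃ x ∈ Finset.Icc 1 n, S = ({{x}, Finset.Icc 1 n \ {x}} : Finset (Finset ℕ))) ∨
       (∃ x ∈ Finset.Icc 1 n, ∃ y ∈ Finset.Icc 1 n, x ≠ 1 ∧ y ≠ 1 ∧ x ≠ y ∧
         S = ({{x, y}, Finset.Icc 1 n \ {x, y}} : Finset (Finset ℕ))))) :
    IsInjective (Finset.Icc 1 n) 𝒮 := by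
  intro Y Y' hY hY' hcY hcY' hne
  obtain ⟨u, hu⟩ : (Y \ Y').Nonempty := by
    rw [Finset.sdiff_nonempty]
    intro hsub
    exact hne (Finset.eq_of_subset_of_card_le hsub (by omega))
  obtain ⟨v, hv⟩ : (Y' \ Y).Nonempty := by
    rw [Finset.sdiff_nonempty]
    intro hsub
    exact hne (Finset.eq_of_subset_of_card_le hsub (by omega)).symm
  rw [Finset.mem_sdiff] at hu hv
  by_cases hu1 : u = 1
  · have hv1 : v ≠ 1 := fun h => hv.2 (h ▸ hu1 ▸ hu.1)
    obtain ⟨S, hS, hp⟩ := key_lemma n 𝒮 h𝒮 Y' Y hY' hY hcY' hcY v hv.1 hv.2 hv1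
    exact ⟨S, hS, phiNe_symm hp⟩
  · exact key_lemma n 𝒮 h𝒮 Y Y' hY hY' hcY hcY' u hu.1 hu.2 hu1

end InjectiveSplitSystems
end

section
/- Let S be a split of a finite set X with |X| ≥ 5, let x, y, z, p be distinct elements of X with Y = {x,y,z,p}, and let q ∈ X−Y. Then φ_{{x,y,z}}(S) ≠ φ_{{x,p,q}}(S) if and only if the restriction S|_{Y∪{q}} is one of the six splits yz|xpq, pq|xyz, xy|zpq, xz|ypq, xp|yzq, xq|yzp of Y∪{q}. -/
namespace InjectiveSplitSystems

open Finset

variable {α : Type*} [DecidableEq α]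

theorem key_statement6 : ∀ t : Finset (Fin 5),
    ((2 ≤ (({0,1,2} : Finset (Fin 5)) ∩ t).card ∧ 2 ≤ (({0,3,4} : Finset (Fin 5)) ∩ tᶜ).card) ∨
     (2 ≤ (({0,1,2} : Finset (Fin 5)) ∩ tᶜ).card ∧ 2 ≤ (({0,3,4} : Finset (Fin 5)) ∩ t).card)) ↔
    (({t, tᶜ} : Finset (Finset (Fin 5))) = {{1,2},{0,3,4}} ∨
     ({t, tᶜ} : Finset (Finset (Fin 5))) = {{3,4},{0,1,2}} ∨
     ({t, tᶜ} : Finset (Finset (Fin 5))) = {{0,1},{2,3,4}} ∨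
     ({t, tᶜ} : Finset (Finset (Fin 5))) = {{0,2},{1,3,4}} ∨
     ({t, tᶜ} : Finset (Finset (Fin 5))) = {{0,3},{1,2,4}} ∨
     ({t, tᶜ} : Finset (Finset (Fin 5))) = {{0,4},{1,2,3}}) := by decide

/-- For a split `S` of `X` (`|X| ≥ 5`) and distinct `x,y,z,p,q ∈ X`:
`φ_{xyz}(S) ≠ φ_{xpq}(S)` iff `S|_{x,y,z,p,q}` is one of the six splits
`yz|xpq`, `pq|xyz`, `xy|zpq`, `xz|ypq`, `xp|yzq`, `xq|yzp`. -/
theorem statement6 (X : Finset α) (hX : 5 ≤ X.card)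
    (S : Finset (Finset α)) (hS : IsSplit X S)
    (x y z p q : α) (hx : x ∈ X) (hy : y ∈ X) (hz : z ∈ X) (hp : p ∈ X) (hq : q ∈ X)
    (hdist : ([x, y, z, p, q] : List α).Pairwise (· ≠ ·)) :
    phiNe {x, y, z} {x, p, q} S ↔
      (restrictSplit S {x, y, z, p, q} = ({{y, z}, {x, p, q}} : Finset (Finset α)) ∨
       restrictSplit S {x, y, z, p, q} = ({{p, q}, {x, y, z}} : Finset (Finset α)) ∨
       restrictSplit S {x, y, z, p, q} = ({{x, y}, {z, p, q}} : Finset (Finset α)) ∨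
       restrictSplit S {x, y, z, p, q} = ({{x, z}, {y, p, q}} : Finset (Finset α)) ∨
       restrictSplit S {x, y, z, p, q} = ({{x, p}, {y, z, q}} : Finset (Finset α)) ∨
       restrictSplit S {x, y, z, p, q} = ({{x, q}, {y, z, p}} : Finset (Finset α))) := by
  obtain ⟨A, B, hSAB, hunion, hinter, hA0, hB0⟩ := hS
  have hAB : A ≠ B := by
    intro h
    rw [h, Finset.inter_self] at hinter
    exact hB0 hinter
  simp only [List.pairwise_cons] at hdist
  obtain ⟨h1, h2, h3, h4, -⟩ := hdist
  have hxy := h1 y (by simp); have hxz := h1 z (by simp); have hxp := h1 p (by simp)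
  have hxq := h1 q (by simp)
  have hyz := h2 z (by simp); have hyp := h2 p (by simp); have hyq := h2 q (by simp)
  have hzp := h3 p (by simp); have hzq := h3 q (by simp)
  have hpq := h4 q (by simp)
  set e : Fin 5 → α := ![x, y, z, p, q] with he_def
  have he : Function.Injective e := by
    intro i j hij
    fin_cases i <;> fin_cases j <;>
      simp_all [e, Matrix.cons_val_zero, Matrix.cons_val_one] <;>
      first
      | rfl
      | (exfalso; first
          | exact hxy hij | exact hxz hij | exact hxp hij | exact hxq hij
          | exact hyz hij | exact hyp hij | exact hyq hij
          | exact hzp hij | exact hzq hij | exact hpq hij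
          | exact hxy hij.symm | exact hxz hij.symm | exact hxp hij.symm | exact hxq hij.symm
          | exact hyz hij.symm | exact hyp hij.symm | exact hyq hij.symm
          | exact hzp hij.symm | exact hzq hij.symm | exact hpq hij.symm)
  have heX : ∀ i, e i ∈ X := by
    intro i; fin_cases i <;> simpa [e]
  set s : Finset (Fin 5) := Finset.univ.filter (fun i => e i ∈ A) with hs_def
  have hsA : ∀ i, e i ∈ A ↔ i ∈ s := by intro i; simp [hs_def]
  have hsB : ∀ i, e i ∈ B ↔ i ∈ sᶜ := by
    intro i
    have hmem : e i ∈ A ∪ B := by rw [hunion]; exact heX i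
    simp only [Finset.mem_compl, ← hsA]
    constructor
    · intro hB hA
      have : e i ∈ A ∩ B := Finset.mem_inter.2 ⟨hA, hB⟩
      simp [hinter] at this
    · intro hA
      rcases Finset.mem_union.1 hmem with h | h
      · exact absurd h hA
      · exact h
  -- the images of index finsets
  have himg : ∀ (t : Finset (Fin 5)) (C : Finset α), (∀ i, e i ∈ C ↔ i ∈ t) →
      ∀ u : Finset (Fin 5), (u.image e) ∩ C = (u ∩ t).image e := by
    intro t C hC u
    ext a
    simp only [Finset.mem_inter, Finset.mem_image]
    constructor
    · rintro ⟨⟨i, hiu, rfl⟩, ha⟩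
      exact ⟨i, by simp [Finset.mem_inter, hiu, (hC i).1 ha], rfl⟩
    · rintro ⟨i, hi, rfl⟩
      obtain ⟨hiu, hit⟩ := Finset.mem_inter.1 (by simpa using hi)
      exact ⟨⟨i, hiu, rfl⟩, (hC i).2 hit⟩
  have hxyz : ({x, y, z} : Finset α) = ({0, 1, 2} : Finset (Fin 5)).image e := by
    simp [e, Finset.image_insert, Finset.image_singleton]
  have hxpq : ({x, p, q} : Finset α) = ({0, 3, 4} : Finset (Fin 5)).image e := by
    simp [e, Finset.image_insert, Finset.image_singleton]
  have hY : ({x, y, z, p, q} : Finset α) = (Finset.univ : Finset (Fin 5)).image e := by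
    have : (Finset.univ : Finset (Fin 5)) = {0, 1, 2, 3, 4} := by decide
    rw [this]
    simp [e, Finset.image_insert, Finset.image_singleton]
  have hcard : ∀ u : Finset (Fin 5), (u.image e).card = u.card :=
    fun u => Finset.card_image_of_injective u he
  -- phiNe characterization
  have hphi : phiNe {x, y, z} {x, p, q} S ↔
      ((2 ≤ (({0,1,2} : Finset (Fin 5)) ∩ s).card ∧ 2 ≤ (({0,3,4} : Finset (Fin 5)) ∩ sᶜ).card) ∨
       (2 ≤ (({0,1,2} : Finset (Fin 5)) ∩ sᶜ).card ∧ 2 ≤ (({0,3,4} : Finset (Fin 5)) ∩ s).card)) := by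
    rw [phiNe, hSAB]
    constructor
    · rintro ⟨t, ht, t', ht', htt', h1, h2⟩
      simp only [Finset.mem_insert, Finset.mem_singleton] at ht ht'
      rcases ht with ht | ht <;> rcases ht' with ht' | ht'
      · exact absurd (ht.trans ht'.symm) htt'
      · left
        rw [ht, hxyz, himg s A hsA] at h1
        rw [ht', hxpq, himg sᶜ B hsB] at h2
        rw [hcard] at h1 h2
        exact ⟨h1, h2⟩
      · right
        rw [ht, hxyz, himg sᶜ B hsB] at h1
        rw [ht', hxpq, himg s A hsA] at h2
        rw [hcard] at h1 h2
        exact ⟨h1, h2⟩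
      · exact absurd (ht.trans ht'.symm) htt'
    · rintro (⟨h1, h2⟩ | ⟨h1, h2⟩)
      · refine ⟨A, by simp, B, by simp, hAB, ?_, ?_⟩
        · rw [hxyz, himg s A hsA, hcard]; exact h1
        · rw [hxpq, himg sᶜ B hsB, hcard]; exact h2
      · refine ⟨B, by simp, A, by simp, fun h => hAB h.symm, ?_, ?_⟩
        · rw [hxyz, himg sᶜ B hsB, hcard]; exact h1
        · rw [hxpq, himg s A hsA, hcard]; exact h2
  -- restrictSplit characterization
  have hAY : A ∩ ({x, y, z, p, q} : Finset α) = s.image e := by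
    rw [hY, Finset.inter_comm, himg s A hsA, Finset.univ_inter]
  have hBY : B ∩ ({x, y, z, p, q} : Finset α) = sᶜ.image e := by
    rw [hY, Finset.inter_comm, himg sᶜ B hsB, Finset.univ_inter]
  have hrS : restrictSplit S {x, y, z, p, q} =
      ({s, sᶜ} : Finset (Finset (Fin 5))).image (Finset.image e) := by
    rw [restrictSplit, hSAB]
    simp only [Finset.image_insert, Finset.image_singleton]
    rw [hAY, hBY]
  have hinj2 : Function.Injective (Finset.image e : Finset (Fin 5) → Finset α) :=
    Finset.image_injective he
  have hinj3 : Function.Injective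
      (Finset.image (Finset.image e) : Finset (Finset (Fin 5)) → Finset (Finset α)) :=
    Finset.image_injective hinj2
  have hc1 : ({{y, z}, {x, p, q}} : Finset (Finset α)) =
      ({{1, 2}, {0, 3, 4}} : Finset (Finset (Fin 5))).image (Finset.image e) := by
    simp [e, Finset.image_insert, Finset.image_singleton]
  have hc2 : ({{p, q}, {x, y, z}} : Finset (Finset α)) =
      ({{3, 4}, {0, 1, 2}} : Finset (Finset (Fin 5))).image (Finset.image e) := by
    simp [e, Finset.image_insert, Finset.image_singleton]
  have hc3 : ({{x, y}, {z, p, q}} : Finset (Finset α)) =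
      ({{0, 1}, {2, 3, 4}} : Finset (Finset (Fin 5))).image (Finset.image e) := by
    simp [e, Finset.image_insert, Finset.image_singleton]
  have hc4 : ({{x, z}, {y, p, q}} : Finset (Finset α)) =
      ({{0, 2}, {1, 3, 4}} : Finset (Finset (Fin 5))).image (Finset.image e) := by
    simp [e, Finset.image_insert, Finset.image_singleton]
  have hc5 : ({{x, p}, {y, z, q}} : Finset (Finset α)) =
      ({{0, 3}, {1, 2, 4}} : Finset (Finset (Fin 5))).image (Finset.image e) := by
    simp [e, Finset.image_insert, Finset.image_singleton]
  have hc6 : ({{x, q}, {y, z, p}} : Finset (Finset α)) =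
      ({{0, 4}, {1, 2, 3}} : Finset (Finset (Fin 5))).image (Finset.image e) := by
    simp [e, Finset.image_insert, Finset.image_singleton]
  rw [hphi, hrS, hc1, hc2, hc3, hc4, hc5, hc6]
  simp only [hinj3.eq_iff]
  exact key_statement6 s


end InjectiveSplitSystems
end

section
/- Let S be a split of a finite set X with |X| ≥ 6, let x, y, z, p be distinct elements of X with Y = {x,y,z,p}, and let q, r ∈ X−Y be distinct. Then φ_{{x,y,z}}(S) ≠ φ_{{p,q,r}}(S) if and only if the restriction S|_{Y∪{q,r}} is a 3-split of Y∪{q,r}, or it is a 2-split of Y∪{q,r} whose part of size 2 is contained in {x,y,z} or in {p,q,r}. -/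
namespace InjectiveSplitSystems

open Finset

variable {α : Type*} [DecidableEq α]

/-- For a split `S` of `X` (`|X| ≥ 6`) and distinct `x,y,z,p,q,r ∈ X`:
`φ_{xyz}(S) ≠ φ_{pqr}(S)` iff `S|_{x,y,z,p,q,r}` is a 3-split, or a 2-split whose part
of size 2 is contained in `{x,y,z}` or in `{p,q,r}`. -/
theorem statement7 (X : Finset α) (hX : 6 ≤ X.card)
    (S : Finset (Finset α)) (hS : IsSplit X S)
    (x y z p q r : α) (hx : x ∈ X) (hy : y ∈ X) (hz : z ∈ X)
    (hp : p ∈ X) (hq : q ∈ X) (hr : r ∈ X)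
    (hdist : ([x, y, z, p, q, r] : List α).Pairwise (· ≠ ·)) :
    phiNe {x, y, z} {p, q, r} S ↔
      (IsRSplit {x, y, z, p, q, r} 3 (restrictSplit S {x, y, z, p, q, r}) ∨
       (IsRSplit {x, y, z, p, q, r} 2 (restrictSplit S {x, y, z, p, q, r}) ∧
        ∃ t ∈ restrictSplit S {x, y, z, p, q, r}, t.card = 2 ∧
          (t ⊆ ({x, y, z} : Finset α) ∨ t ⊆ ({p, q, r} : Finset α)))) := by

  classical
  obtain ⟨A, B, hSeq, hunion, hint, hAne, hBne⟩ := hS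
  simp [List.pairwise_cons] at hdist
  obtain ⟨⟨hxy, hxz, hxp, hxq, hxr⟩, ⟨hyz, hyp, hyq, hyr⟩, ⟨hzp, hzq, hzr⟩, ⟨hpq, hpr⟩, hqr⟩ := hdist
  have hYY' : Disjoint ({x, y, z} : Finset α) ({p, q, r} : Finset α) := by
    rw [Finset.disjoint_left]
    intro a ha hb
    simp only [mem_insert, mem_singleton] at ha hb
    rcases ha with rfl | rfl | rfl <;> rcases hb with rfl | rfl | rfl <;>
      first
      | exact hxp rfl | exact hxq rfl | exact hxr rfl
      | exact hyp rfl | exact hyq rfl | exact hyr rfl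
      | exact hzp rfl | exact hzq rfl | exact hzr rfl
  have hYunion : ({x, y, z} : Finset α) ∪ {p, q, r} = {x, y, z, p, q, r} := by
    ext a
    simp only [mem_union, mem_insert, mem_singleton]
    tauto
  have hYcard : ({x, y, z} : Finset α).card = 3 := by
    rw [card_insert_of_notMem (by simp [hxy, hxz]),
      card_insert_of_notMem (by simp [hyz]), card_singleton]
  have hY'card : ({p, q, r} : Finset α).card = 3 := by
    rw [card_insert_of_notMem (by simp [hpq, hpr]),
      card_insert_of_notMem (by simp [hqr]), card_singleton]
  have hY6card : ({x, y, z, p, q, r} : Finset α).card = 6 := by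
    rw [card_insert_of_notMem (by simp [hxy, hxz, hxp, hxq, hxr]),
      card_insert_of_notMem (by simp [hyz, hyp, hyq, hyr]),
      card_insert_of_notMem (by simp [hzp, hzq, hzr]),
      card_insert_of_notMem (by simp [hpq, hpr]),
      card_insert_of_notMem (by simp [hqr]), card_singleton]
  have hYsub : ({x, y, z} : Finset α) ⊆ X := by
    simp [insert_subset_iff, hx, hy, hz]
  have hY'sub : ({p, q, r} : Finset α) ⊆ X := by
    simp [insert_subset_iff, hp, hq, hr]
  have hY6sub : ({x, y, z, p, q, r} : Finset α) ⊆ X := by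
    simp [insert_subset_iff, hx, hy, hz, hp, hq, hr]
  set Y : Finset α := {x, y, z} with hYdef
  set Y' : Finset α := {p, q, r} with hY'def
  set Y6 : Finset α := {x, y, z, p, q, r} with hY6def
  have hAB : A ≠ B := by
    intro h
    apply hAne
    rw [← hint, h, inter_self]
  have hdAB : Disjoint A B := disjoint_iff_inter_eq_empty.mpr hint
  -- cardinalities of intersections
  have key : ∀ T : Finset α, T ⊆ X → (T ∩ A).card + (T ∩ B).card = T.card := by
    intro T hT
    rw [← card_union_of_disjoint (hdAB.mono inter_subset_right inter_subset_right),
      ← inter_union_distrib_left, hunion, inter_eq_left.mpr hT]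
  have hiA : (Y ∩ A).card + (Y ∩ B).card = 3 := by rw [key Y hYsub, hYcard]
  have hjA : (Y' ∩ A).card + (Y' ∩ B).card = 3 := by rw [key Y' hY'sub, hY'card]
  set a : Finset α := A ∩ Y6 with hadef
  set b : Finset α := B ∩ Y6 with hbdef
  have haeq : a = (Y ∩ A) ∪ (Y' ∩ A) := by
    rw [hadef, ← hYunion, inter_comm, union_inter_distrib_right]
  have hbeq : b = (Y ∩ B) ∪ (Y' ∩ B) := by
    rw [hbdef, ← hYunion, inter_comm, union_inter_distrib_right]
  have hacard : a.card = (Y ∩ A).card + (Y' ∩ A).card := by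
    rw [haeq, card_union_of_disjoint (hYY'.mono inter_subset_left inter_subset_left)]
  have hbcard : b.card = (Y ∩ B).card + (Y' ∩ B).card := by
    rw [hbeq, card_union_of_disjoint (hYY'.mono inter_subset_left inter_subset_left)]
  have habu : a ∪ b = Y6 := by
    rw [hadef, hbdef, ← union_inter_distrib_right, hunion, inter_eq_right.mpr hY6sub]
  have habi : a ∩ b = ∅ := by
    rw [hadef, hbdef]
    have h : A ∩ Y6 ∩ (B ∩ Y6) = (A ∩ B) ∩ Y6 := by
      ext t; simp only [mem_inter]; tauto
    rw [h, hint, empty_inter]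
  have hsum6 : a.card + b.card = 6 := by
    have h := card_union_add_card_inter a b
    rw [habu, habi, hY6card, card_empty] at h
    omega
  have hres : restrictSplit S Y6 = {a, b} := by
    rw [restrictSplit, hSeq, image_insert, image_singleton]
  -- subset translations
  have hsubYa : a ⊆ Y ↔ (Y' ∩ A).card = 0 := by
    constructor
    · intro h
      rw [card_eq_zero, ← subset_empty]
      intro t ht
      have h1 : t ∈ Y := h (haeq ▸ mem_union_right _ ht)
      have h2 : t ∈ Y' := (mem_inter.mp ht).1
      exact absurd h1 (Finset.disjoint_right.mp hYY' h2)
    · intro h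
      rw [card_eq_zero] at h
      rw [haeq, h, union_empty]
      exact inter_subset_left
  have hsubY'a : a ⊆ Y' ↔ (Y ∩ A).card = 0 := by
    constructor
    · intro h
      rw [card_eq_zero, ← subset_empty]
      intro t ht
      have h1 : t ∈ Y' := h (haeq ▸ mem_union_left _ ht)
      have h2 : t ∈ Y := (mem_inter.mp ht).1
      exact absurd h1 (Finset.disjoint_left.mp hYY' h2)
    · intro h
      rw [card_eq_zero] at h
      rw [haeq, h, empty_union]
      exact inter_subset_left
  have hsubYb : b ⊆ Y ↔ (Y' ∩ B).card = 0 := by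
    constructor
    · intro h
      rw [card_eq_zero, ← subset_empty]
      intro t ht
      have h1 : t ∈ Y := h (hbeq ▸ mem_union_right _ ht)
      have h2 : t ∈ Y' := (mem_inter.mp ht).1
      exact absurd h1 (Finset.disjoint_right.mp hYY' h2)
    · intro h
      rw [card_eq_zero] at h
      rw [hbeq, h, union_empty]
      exact inter_subset_left
  have hsubY'b : b ⊆ Y' ↔ (Y ∩ B).card = 0 := by
    constructor
    · intro h
      rw [card_eq_zero, ← subset_empty]
      intro t ht
      have h1 : t ∈ Y' := h (hbeq ▸ mem_union_left _ ht)
      have h2 : t ∈ Y := (mem_inter.mp ht).1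
      exact absurd h1 (Finset.disjoint_left.mp hYY' h2)
    · intro h
      rw [card_eq_zero] at h
      rw [hbeq, h, empty_union]
      exact inter_subset_left
  -- constructor for r-splits
  have mkRS : ∀ r' : ℕ, 0 < r' → a.card = r' ∨ b.card = r' → r' ≤ a.card → r' ≤ b.card →
      IsRSplit Y6 r' ({a, b} : Finset (Finset α)) := by
    intro r' hr hor h1 h2
    refine ⟨⟨a, b, rfl, habu, habi, ?_, ?_⟩, ?_, ?_⟩
    · intro h; rw [h] at h1; simp at h1; omega
    · intro h; rw [h] at h2; simp at h2; omega
    · rcases hor with h | h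
      · exact ⟨a, mem_insert_self _ _, h⟩
      · exact ⟨b, by simp, h⟩
    · intro t ht
      rcases mem_insert.mp ht with rfl | ht
      · exact h1
      · rw [mem_singleton.mp ht]; exact h2
  have hAmem : A ∈ S := by rw [hSeq]; exact mem_insert_self _ _
  have hBmem : B ∈ S := by rw [hSeq]; simp
  constructor
  · rintro ⟨t, ht, t', ht', hne, h1, h2⟩
    rw [hSeq] at ht ht'
    simp only [mem_insert, mem_singleton] at ht ht'
    have hkey : (2 ≤ (Y ∩ A).card ∧ 2 ≤ (Y' ∩ B).card) ∨
        (2 ≤ (Y ∩ B).card ∧ 2 ≤ (Y' ∩ A).card) := by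
      rcases ht with h | h <;> rcases ht' with h' | h' <;>
        rw [h, h'] at hne <;> rw [h] at h1 <;> rw [h'] at h2
      · exact absurd rfl hne
      · exact Or.inl ⟨h1, h2⟩
      · exact Or.inr ⟨h1, h2⟩
      · exact absurd rfl hne
    rw [hres]
    by_cases h3 : a.card = 3
    · exact Or.inl (mkRS 3 (by omega) (Or.inl h3) (by omega) (by omega))
    · right
      have h24 : a.card = 2 ∨ a.card = 4 := by omega
      refine ⟨mkRS 2 (by omega) ?_ (by omega) (by omega), ?_⟩
      · rcases h24 with h | h
        · exact Or.inl h
        · exact Or.inr (by omega)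
      · rcases h24 with h | h
        · refine ⟨a, mem_insert_self _ _, h, ?_⟩
          rcases hkey with ⟨k1, k2⟩ | ⟨k1, k2⟩
          · exact Or.inl (hsubYa.mpr (by omega))
          · exact Or.inr (hsubY'a.mpr (by omega))
        · refine ⟨b, by simp, by omega, ?_⟩
          rcases hkey with ⟨k1, k2⟩ | ⟨k1, k2⟩
          · exact Or.inr (hsubY'b.mpr (by omega))
          · exact Or.inl (hsubYb.mpr (by omega))
  · intro h
    rw [hres] at h
    have hkey : (2 ≤ (Y ∩ A).card ∧ 2 ≤ (Y' ∩ B).card) ∨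
        (2 ≤ (Y ∩ B).card ∧ 2 ≤ (Y' ∩ A).card) := by
      rcases h with ⟨_, _, hall⟩ | ⟨⟨_, _, hall⟩, t, htm, htc, hts⟩
      · have h1 := hall a (mem_insert_self _ _)
        have h2 := hall b (by simp)
        omega
      · have h1 := hall a (mem_insert_self _ _)
        have h2 := hall b (by simp)
        rcases mem_insert.mp htm with rfl | htm
        · rcases hts with hts | hts
          · have hj := hsubYa.mp hts; omega
          · have hj := hsubY'a.mp hts; omega
        · rw [mem_singleton.mp htm] at htc hts
          rcases hts with hts | hts
          · have hj := hsubYb.mp hts; omega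
          · have hj := hsubY'b.mp hts; omega
    rcases hkey with ⟨k1, k2⟩ | ⟨k1, k2⟩
    · exact ⟨A, hAmem, B, hBmem, hAB, k1, k2⟩
    · exact ⟨B, hBmem, A, hAmem, Ne.symm hAB, k1, k2⟩

end InjectiveSplitSystems
end

section
/- Let 𝒮 be a split system on a finite set X. If 𝒮 4-dices X and |X| ≥ 5, then for every 5-subset Y of X the restriction 𝒮|_Y contains at least four 2-splits. -/
namespace InjectiveSplitSystems

open Finset

variable {α : Type*} [DecidableEq α]

open scoped Classical in
/-- A 2-split of a 4-subset `Y.erase y` lifts to a 2-split of `Y` whose 2-side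
avoids `y` and which restricts back to the original split. -/
lemma key_lift (X Y : Finset α) (𝒮 : Finset (Finset (Finset α)))
    (h𝒮 : ∀ S ∈ 𝒮, IsSplit X S) (hYX : Y ⊆ X) (hY5 : Y.card = 5)
    {y : α} (hy : y ∈ Y) {S' : Finset (Finset α)}
    (hmem : S' ∈ restrictSS 𝒮 (Y.erase y)) (h2 : IsRSplit (Y.erase y) 2 S') :
    ∃ U, (U ∈ restrictSS 𝒮 Y ∧ IsRSplit Y 2 U ∧ (∃ t ∈ U, t.card = 2 ∧ y ∉ t)) ∧
      restrictSplit U (Y.erase y) = S' := by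
  classical
  set Z := Y.erase y with hZ
  have hZY : Z ⊆ Y := erase_subset _ _
  have hZ4 : Z.card = 4 := by rw [hZ, card_erase_of_mem hy, hY5]
  obtain ⟨hmemI, hne⟩ := mem_filter.mp hmem
  obtain ⟨S, hS𝒮, hSr⟩ := mem_image.mp hmemI
  obtain ⟨A, B, hSAB, hAB, hABd, hAne, hBne⟩ := h𝒮 S hS𝒮
  have hS' : S' = {A ∩ Z, B ∩ Z} := by
    rw [← hSr, hSAB]; simp [restrictSplit]
  have hAZ : A ∩ Z ∈ S' := by rw [hS']; simp
  have hBZ : B ∩ Z ∈ S' := by rw [hS']; simp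
  obtain ⟨hsplit, hex, hall⟩ := h2
  have hA2 : 2 ≤ (A ∩ Z).card := hall _ hAZ
  have hB2 : 2 ≤ (B ∩ Z).card := hall _ hBZ
  have hdisAB : Disjoint A B := disjoint_iff_inter_eq_empty.mpr hABd
  have hsumZ : (A ∩ Z).card + (B ∩ Z).card = 4 := by
    rw [← card_union_of_disjoint
      (hdisAB.mono inter_subset_left inter_subset_left)]
    rw [← union_inter_distrib_right, hAB,
      inter_eq_right.mpr (hZY.trans hYX), hZ4]
  have hAZ2 : (A ∩ Z).card = 2 := by omega
  have hBZ2 : (B ∩ Z).card = 2 := by omega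
  have hsumY : (A ∩ Y).card + (B ∩ Y).card = 5 := by
    rw [← card_union_of_disjoint
      (hdisAB.mono inter_subset_left inter_subset_left)]
    rw [← union_inter_distrib_right, hAB, inter_eq_right.mpr hYX, hY5]
  have hAZY : A ∩ Z ⊆ A ∩ Y := inter_subset_inter Subset.rfl hZY
  have hBZY : B ∩ Z ⊆ B ∩ Y := inter_subset_inter Subset.rfl hZY
  have hAY2 : 2 ≤ (A ∩ Y).card := hAZ2 ▸ card_le_card hAZY
  have hBY2 : 2 ≤ (B ∩ Y).card := hBZ2 ▸ card_le_card hBZY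
  refine ⟨{A ∩ Y, B ∩ Y}, ⟨?_, ?_, ?_⟩, ?_⟩
  · rw [restrictSS, mem_filter]
    constructor
    · exact mem_image.mpr ⟨S, hS𝒮, by rw [hSAB]; simp [restrictSplit]⟩
    · intro t ht
      rcases mem_insert.mp ht with rfl | ht
      · intro h; rw [h] at hAY2; simp at hAY2
      · rw [mem_singleton] at ht; subst ht
        intro h; rw [h] at hBY2; simp at hBY2
  · refine ⟨⟨A ∩ Y, B ∩ Y, rfl, ?_, ?_, ?_, ?_⟩, ?_, ?_⟩
    · rw [← union_inter_distrib_right, hAB, inter_eq_right.mpr hYX]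
    · rw [inter_inter_inter_comm, hABd, empty_inter]
    · intro h; rw [h] at hAY2; simp at hAY2
    · intro h; rw [h] at hBY2; simp at hBY2
    · rcases Nat.lt_or_ge (A ∩ Y).card 3 with h | h
      · exact ⟨A ∩ Y, by simp, by omega⟩
      · exact ⟨B ∩ Y, by simp, by omega⟩
    · intro t ht
      rcases mem_insert.mp ht with rfl | ht
      · exact hAY2
      · rw [mem_singleton] at ht; subst ht; exact hBY2
  · rcases Nat.lt_or_ge (A ∩ Y).card 3 with h | h
    · have hAeq : A ∩ Y = A ∩ Z :=
        (eq_of_subset_of_card_le hAZY (by omega)).symm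
      refine ⟨A ∩ Y, by simp, by omega, ?_⟩
      rw [hAeq]
      exact fun hmem' => notMem_erase y Y (mem_of_mem_inter_right hmem')
    · have hBY3 : (B ∩ Y).card = 2 := by omega
      have hBeq : B ∩ Y = B ∩ Z :=
        (eq_of_subset_of_card_le hBZY (by omega)).symm
      refine ⟨B ∩ Y, by simp, hBY3, ?_⟩
      rw [hBeq]
      exact fun hmem' => notMem_erase y Y (mem_of_mem_inter_right hmem')
  · have hAYZ : A ∩ Y ∩ Z = A ∩ Z := by
      rw [inter_assoc, inter_eq_right.mpr hZY]
    have hBYZ : B ∩ Y ∩ Z = B ∩ Z := by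
      rw [inter_assoc, inter_eq_right.mpr hZY]
    rw [restrictSplit]
    simp only [image_insert, image_singleton]
    rw [hAYZ, hBYZ, hS']

/-- A 2-split of a 5-set has its 2-side avoiding exactly 3 points. -/
lemma count_bound (Y : Finset α) (hY5 : Y.card = 5) (U : Finset (Finset α))
    (hU : IsRSplit Y 2 U) :
    (Y.filter (fun y => ∃ t ∈ U, t.card = 2 ∧ y ∉ t)).card ≤ 3 := by
  classical
  obtain ⟨⟨A, B, rfl, hun, hint, hA, hB⟩, hex, hall⟩ := hU
  have hA2 : 2 ≤ A.card := hall _ (by simp)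
  have hB2 : 2 ≤ B.card := hall _ (by simp)
  have hsum : A.card + B.card = 5 := by
    rw [← card_union_of_disjoint (disjoint_iff_inter_eq_empty.mpr hint), hun,
      hY5]
  have haux : ∀ P Q : Finset α, P ∪ Q = Y → P.card = 2 → Q.card = 3 →
      (Y.filter (fun y => ∃ t ∈ ({P, Q} : Finset (Finset α)),
        t.card = 2 ∧ y ∉ t)).card ≤ 3 := by
    intro P Q hunPQ hP2 hQ3
    have hsub : (Y.filter (fun y => ∃ t ∈ ({P, Q} : Finset (Finset α)),
        t.card = 2 ∧ y ∉ t)) ⊆ Y \ P := by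
      intro y hy'
      obtain ⟨hyY, t, ht, ht2, hyt⟩ := mem_filter.mp hy'
      rcases mem_insert.mp ht with rfl | ht
      · exact mem_sdiff.mpr ⟨hyY, hyt⟩
      · rw [mem_singleton] at ht; subst ht; omega
    calc (Y.filter _).card ≤ (Y \ P).card := card_le_card hsub
      _ = Y.card - P.card := card_sdiff_of_subset (hunPQ ▸ subset_union_left)
      _ ≤ 3 := by omega
  rcases Nat.lt_or_ge A.card 3 with h | h
  · exact haux A B hun (by omega) (by omega)
  · rw [Finset.pair_comm A B]
    exact haux B A (by rw [union_comm, hun]) (by omega) (by omega)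

/-- If `𝒮` 4-dices `X` and `|X| ≥ 5`, then for every 5-subset `Y` of
`X` the restriction `𝒮|_Y` contains at least four 2-splits. -/
theorem statement8 (X : Finset α) (𝒮 : Finset (Finset (Finset α)))
    (h𝒮 : IsSplitSystem X 𝒮) (h4 : FourDices X 𝒮) (hX : 5 ≤ X.card) :
    ∀ Y ⊆ X, Y.card = 5 →
      ∃ 𝒯 ⊆ restrictSS 𝒮 Y, 4 ≤ 𝒯.card ∧ ∀ S ∈ 𝒯, IsRSplit Y 2 S := by
  classical
  intro Y hYX hY5
  set T := (restrictSS 𝒮 Y).filter (fun S => IsRSplit Y 2 S) with hT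
  refine ⟨T, filter_subset _ _, ?_, fun S hS => (mem_filter.mp hS).2⟩
  have h4' := h4.resolve_left (by omega)
  set p : α → Finset (Finset α) → Prop :=
    fun y U => ∃ t ∈ U, t.card = 2 ∧ y ∉ t with hp
  have hstep : ∀ y ∈ Y, 2 ≤ (T.filter (p y)).card := by
    intro y hy
    obtain ⟨𝒯y, h𝒯1, h𝒯2, h𝒯3⟩ := h4' (Y.erase y) ((erase_subset _ _).trans hYX)
      (by rw [card_erase_of_mem hy, hY5])
    have hkey : ∀ S' ∈ 𝒯y, ∃ U ∈ T.filter (p y),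
        restrictSplit U (Y.erase y) = S' := by
      intro S' hS'
      obtain ⟨U, ⟨hU1, hU2, hU3⟩, hU4⟩ := key_lift X Y 𝒮 h𝒮.1 hYX hY5 hy
        (h𝒯1 hS') (h𝒯3 S' hS')
      exact ⟨U, mem_filter.mpr ⟨mem_filter.mpr ⟨hU1, hU2⟩, hU3⟩, hU4⟩
    choose! g hg1 hg2 using hkey
    calc 2 ≤ 𝒯y.card := h𝒯2
      _ ≤ (T.filter (p y)).card := by
          apply card_le_card_of_injOn g hg1
          intro S1 h1 S2 h2 heq
          rw [← hg2 S1 h1, ← hg2 S2 h2, heq]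
  have hsum1 : 10 ≤ ∑ y ∈ Y, (T.filter (p y)).card := by
    calc (10 : ℕ) = ∑ _y ∈ Y, 2 := by rw [sum_const, hY5, smul_eq_mul]
      _ ≤ _ := sum_le_sum hstep
  have hsum2 : ∑ y ∈ Y, (T.filter (p y)).card
      = ∑ U ∈ T, (Y.filter (fun y => p y U)).card := by
    simp only [card_filter]
    exact Finset.sum_comm
  have hsum3 : ∑ U ∈ T, (Y.filter (fun y => p y U)).card ≤ 3 * T.card := by
    calc ∑ U ∈ T, (Y.filter (fun y => p y U)).card
        ≤ ∑ _U ∈ T, 3 := sum_le_sum (fun U hU =>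
          count_bound Y hY5 U (mem_filter.mp hU).2)
      _ = 3 * T.card := by rw [sum_const]; ring
  omega

end InjectiveSplitSystems
end

section
/- Let 𝒮 be a split system on a finite set X. If 𝒮 5-dices X and |X| ≥ 6, then for every 6-subset Y of X the restriction 𝒮|_Y contains a 3-split or at least eight 2-splits. -/
namespace InjectiveSplitSystems

open Finset

variable {α : Type*} [DecidableEq α]

section Aux

lemma mem_restrictSS' {𝒮 : Finset (Finset (Finset α))} {Y : Finset α} {T : Finset (Finset α)} :
    T ∈ restrictSS 𝒮 Y ↔ (∃ S ∈ 𝒮, restrictSplit S Y = T) ∧ ∀ t ∈ T, t ≠ ∅ := by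
  classical
  simp [restrictSS, Finset.mem_filter, Finset.mem_image]

lemma restrictSplit_pair (A B Y : Finset α) :
    restrictSplit ({A, B} : Finset (Finset α)) Y = {A ∩ Y, B ∩ Y} := by
  simp [restrictSplit]

lemma pair_eq_cases {β : Type*} [DecidableEq β] {a b c d : β}
    (h : ({a, b} : Finset β) = {c, d}) : (a = c ∧ b = d) ∨ (a = d ∧ b = c) := by
  have ha : a = c ∨ a = d := by
    have : a ∈ ({c, d} : Finset β) := h ▸ Finset.mem_insert_self a {b}
    simpa using this
  have hb : b = c ∨ b = d := by
    have : b ∈ ({c, d} : Finset β) := by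
      rw [← h]; simp
    simpa using this
  have hc : c = a ∨ c = b := by
    have : c ∈ ({a, b} : Finset β) := by rw [h]; simp
    simpa using this
  have hd : d = a ∨ d = b := by
    have : d ∈ ({a, b} : Finset β) := by rw [h]; simp
    simpa using this
  by_cases hac : a = c
  · refine Or.inl ⟨hac, ?_⟩
    rcases hb with rfl | h
    · rcases hd with rfl | rfl
      · exact hac.symm
      · rfl
    · exact h
  · have h1 : a = d := ha.resolve_left hac
    refine Or.inr ⟨h1, ?_⟩
    rcases hc with h2 | h2
    · exact absurd h2.symm hac
    · exact h2.symm

lemma two_split_struct {Z : Finset α} {S : Finset (Finset α)}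
    (h : IsRSplit Z 2 S) : ∃ P, P ⊆ Z ∧ P.card = 2 ∧ S = {P, Z \ P} := by
  obtain ⟨⟨A, B, hS, hUn, hInt, hA, hB⟩, ⟨C, hCS, hC2⟩, hmin⟩ := h
  have hdisj : Disjoint A B := Finset.disjoint_iff_inter_eq_empty.2 hInt
  have hCS' : C = A ∨ C = B := by rw [hS] at hCS; simpa using hCS
  rcases hCS' with rfl | rfl
  · have hBA : B = Z \ C := by rw [← hUn, Finset.union_sdiff_cancel_left hdisj]
    exact ⟨C, hUn ▸ Finset.subset_union_left, hC2, by rw [hS, hBA]⟩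
  · have hAB : A = Z \ C := by rw [← hUn, Finset.union_sdiff_cancel_right hdisj]
    exact ⟨C, hUn ▸ Finset.subset_union_right, hC2, by rw [hS, hAB, Finset.pair_comm]⟩

lemma pair_two_split {Y P : Finset α} (hP : P ⊆ Y) (h2 : P.card = 2) (h6 : Y.card = 6) :
    IsRSplit Y 2 ({P, Y \ P} : Finset (Finset α)) := by
  have hc : (Y \ P).card = 4 := by rw [Finset.card_sdiff_of_subset hP, h6, h2]
  refine ⟨⟨P, Y \ P, rfl, Finset.union_sdiff_of_subset hP, ?_, ?_, ?_⟩,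
    ⟨P, by simp, h2⟩, ?_⟩
  · exact Finset.inter_sdiff_self P Y
  · intro h; rw [h] at h2; simp at h2
  · intro h; rw [h] at hc; simp at hc
  · intro A hA
    rcases Finset.mem_insert.1 hA with rfl | hA
    · omega
    · rw [Finset.mem_singleton] at hA; subst hA; omega

lemma gval {P Q : Finset α} (hP : P.card = 2) (hQ : Q.card ≠ 2) :
    ((({P, Q} : Finset (Finset α)).filter fun A => A.card = 2).biUnion id) = P := by
  rw [Finset.filter_insert, if_pos hP, Finset.filter_singleton, if_neg hQ]
  simp

lemma lift_pair {X Y : Finset α} {𝒮 : Finset (Finset (Finset α))}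
    (hYX : Y ⊆ X) (hY6 : Y.card = 6)
    (h3 : ¬ ∃ S ∈ restrictSS 𝒮 Y, IsRSplit Y 3 S)
    {y : α} (hy : y ∈ Y) {A B P : Finset α}
    (hAB : ({A, B} : Finset (Finset α)) ∈ 𝒮)
    (hUn : A ∪ B = X) (hInt : A ∩ B = ∅)
    (hPA : A ∩ (Y \ {y}) = P) (hQB : B ∩ (Y \ {y}) = (Y \ {y}) \ P)
    (hP2 : P.card = 2) :
    ({P, Y \ P} : Finset (Finset α)) ∈ restrictSS 𝒮 Y := by
  classical
  set Z := Y \ {y} with hZdef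
  have hZY : Z ⊆ Y := Finset.sdiff_subset
  have hyZ : y ∉ Z := by simp [hZdef]
  have hYins : Y = insert y Z := by
    rw [hZdef, Finset.sdiff_singleton_eq_erase, Finset.insert_erase hy]
  have hPZ : P ⊆ Z := hPA ▸ Finset.inter_subset_right
  have hyP : y ∉ P := fun h => hyZ (hPZ h)
  have hZ5 : Z.card = 5 := by
    rw [hZdef, Finset.card_sdiff_of_subset (by simpa using hy), hY6, Finset.card_singleton]
  have hcZP : (Z \ P).card = 3 := by rw [Finset.card_sdiff_of_subset hPZ, hZ5, hP2]
  have hyX : y ∈ X := hYX hy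
  by_cases hyA : y ∈ A
  · exfalso
    apply h3
    have hyB : y ∉ B := by
      intro h
      have : y ∈ A ∩ B := Finset.mem_inter.2 ⟨hyA, h⟩
      rw [hInt] at this; exact absurd this (Finset.notMem_empty y)
    have hAY : A ∩ Y = insert y P := by
      rw [hYins, Finset.inter_insert_of_mem hyA, hPA]
    have hBY : B ∩ Y = Z \ P := by
      rw [hYins, Finset.inter_insert_of_notMem hyB, hQB]
    have hcAY : (A ∩ Y).card = 3 := by
      rw [hAY, Finset.card_insert_of_notMem hyP, hP2]
    have hcBY : (B ∩ Y).card = 3 := by rw [hBY, hcZP]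
    refine ⟨{A ∩ Y, B ∩ Y}, ?_, ?_⟩
    · refine mem_restrictSS'.2 ⟨⟨{A, B}, hAB, restrictSplit_pair A B Y⟩, ?_⟩
      intro t ht
      rcases Finset.mem_insert.1 ht with rfl | ht
      · intro h; rw [h] at hcAY; simp at hcAY
      · rw [Finset.mem_singleton] at ht; subst ht
        intro h; rw [h] at hcBY; simp at hcBY
    · refine ⟨⟨A ∩ Y, B ∩ Y, rfl, ?_, ?_, ?_, ?_⟩, ⟨A ∩ Y, by simp, hcAY⟩, ?_⟩
      · rw [← Finset.union_inter_distrib_right, hUn, Finset.inter_eq_right.2 hYX]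
      · have hsub : (A ∩ Y) ∩ (B ∩ Y) ⊆ A ∩ B := by
          intro x hx
          simp only [Finset.mem_inter] at hx ⊢
          tauto
        rw [hInt] at hsub
        exact Finset.subset_empty.1 hsub
      · intro h; rw [h] at hcAY; simp at hcAY
      · intro h; rw [h] at hcBY; simp at hcBY
      · intro C hC
        rcases Finset.mem_insert.1 hC with rfl | hC
        · omega
        · rw [Finset.mem_singleton] at hC; subst hC; omega
  · have hyB : y ∈ B := by
      have : y ∈ A ∪ B := by rw [hUn]; exact hyX
      rcases Finset.mem_union.1 this with h | h
      · exact absurd h hyA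
      · exact h
    have hAY : A ∩ Y = P := by
      rw [hYins, Finset.inter_insert_of_notMem hyA, hPA]
    have hBY : B ∩ Y = Y \ P := by
      rw [hYins, Finset.inter_insert_of_mem hyB, hQB]
      exact (Finset.insert_sdiff_of_notMem Z hyP).symm
    have hcYP : (Y \ P).card = 4 := by
      rw [Finset.card_sdiff_of_subset (hPZ.trans hZY), hY6, hP2]
    refine mem_restrictSS'.2 ⟨⟨{A, B}, hAB, by rw [restrictSplit_pair, hAY, hBY]⟩, ?_⟩
    intro t ht
    rcases Finset.mem_insert.1 ht with rfl | ht
    · intro h; rw [h] at hP2; simp at hP2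
    · rw [Finset.mem_singleton] at ht; subst ht
      intro h; rw [h] at hcYP; simp at hcYP

end Aux

/-- If `𝒮` 5-dices `X` and `|X| ≥ 6`, then for every 6-subset `Y` of
`X` the restriction `𝒮|_Y` contains a 3-split or at least eight 2-splits. -/
theorem statement9 (X : Finset α) (𝒮 : Finset (Finset (Finset α)))
    (h𝒮 : IsSplitSystem X 𝒮) (h5 : FiveDices X 𝒮) (hX : 6 ≤ X.card) :
    ∀ Y ⊆ X, Y.card = 6 →
      (∃ S ∈ restrictSS 𝒮 Y, IsRSplit Y 3 S) ∨
      ∃ 𝒯 ⊆ restrictSS 𝒮 Y, 8 ≤ 𝒯.card ∧ ∀ S ∈ 𝒯, IsRSplit Y 2 S := by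
  classical
  intro Y hYX hY6
  by_cases h3 : ∃ S ∈ restrictSS 𝒮 Y, IsRSplit Y 3 S
  · exact Or.inl h3
  right
  set pairs := (Y.powersetCard 2).filter
    (fun P => ({P, Y \ P} : Finset (Finset α)) ∈ restrictSS 𝒮 Y) with hpairsdef
  have hpmem : ∀ P ∈ pairs, P ⊆ Y ∧ P.card = 2 ∧
      ({P, Y \ P} : Finset (Finset α)) ∈ restrictSS 𝒮 Y := by
    intro P hP
    rw [hpairsdef, Finset.mem_filter, Finset.mem_powersetCard] at hP
    tauto
  have key : ∀ y ∈ Y, 5 ≤ (pairs.filter fun P => y ∉ P).card := by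
    intro y hy
    have hZY : Y \ {y} ⊆ Y := Finset.sdiff_subset
    have hZX : Y \ {y} ⊆ X := hZY.trans hYX
    have hZ5 : (Y \ {y}).card = 5 := by
      rw [Finset.card_sdiff_of_subset (by simpa using hy), hY6, Finset.card_singleton]
    rcases h5 with hlt | h5'
    · omega
    obtain ⟨𝒯y, hsub, hcard, hsplit⟩ := h5' (Y \ {y}) hZX hZ5
    set g : Finset (Finset α) → Finset α :=
      fun S => (S.filter fun A => A.card = 2).biUnion id with hgdef
    have hgS : ∀ S ∈ 𝒯y, g S ⊆ Y \ {y} ∧ (g S).card = 2 ∧ S = {g S, (Y \ {y}) \ g S} := by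
      intro S hS
      obtain ⟨P, hPZ, hP2, rfl⟩ := two_split_struct (hsplit S hS)
      have hc3 : ((Y \ {y}) \ P).card = 3 := by rw [Finset.card_sdiff_of_subset hPZ, hZ5, hP2]
      have hgP : g {P, (Y \ {y}) \ P} = P := gval hP2 (by omega)
      rw [hgP]
      exact ⟨hPZ, hP2, rfl⟩
    refine le_trans hcard (Finset.card_le_card_of_injOn g ?_ ?_)
    · intro S hS
      obtain ⟨hPZ, hP2, hSeq⟩ := hgS S hS
      have hmem : S ∈ restrictSS 𝒮 (Y \ {y}) := hsub hS
      obtain ⟨⟨S₀, hS₀, hres⟩, hne⟩ := mem_restrictSS'.1 hmem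
      obtain ⟨A, B, hS₀eq, hUn, hInt, hA, hB⟩ := h𝒮.1 S₀ hS₀
      rw [hS₀eq] at hS₀
      rw [hS₀eq, restrictSplit_pair, hSeq] at hres
      have hyP : y ∉ g S := fun h => by simpa using hPZ h
      have hPY : g S ⊆ Y := hPZ.trans hZY
      have hin : ({g S, Y \ g S} : Finset (Finset α)) ∈ restrictSS 𝒮 Y := by
        rcases pair_eq_cases hres with ⟨h1, h2⟩ | ⟨h1, h2⟩
        · exact lift_pair hYX hY6 h3 hy hS₀ hUn hInt h1 h2 hP2
        · exact lift_pair hYX hY6 h3 hy (by rwa [Finset.pair_comm])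
            (by rwa [Finset.union_comm]) (by rwa [Finset.inter_comm]) h2 h1 hP2
      rw [Finset.mem_coe, Finset.mem_filter]
      exact ⟨Finset.mem_filter.2 ⟨Finset.mem_powersetCard.2 ⟨hPY, hP2⟩, hin⟩, hyP⟩
    · intro S hS S' hS' hgg
      rw [(hgS S hS).2.2, (hgS S' hS').2.2, hgg]
  have hfilt : ∀ P ∈ pairs, (Y.filter fun y => y ∉ P).card = 4 := by
    intro P hP
    obtain ⟨hPY, hP2, -⟩ := hpmem P hP
    have : Y.filter (fun y => y ∉ P) = Y \ P := by
      ext x; simp [Finset.mem_sdiff]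
    rw [this, Finset.card_sdiff_of_subset hPY, hY6, hP2]
  have hdouble : ∑ y ∈ Y, (pairs.filter fun P => y ∉ P).card
      = ∑ P ∈ pairs, (Y.filter fun y => y ∉ P).card := by
    simp_rw [Finset.card_filter]
    exact Finset.sum_comm
  have h30 : 30 ≤ ∑ y ∈ Y, (pairs.filter fun P => y ∉ P).card := by
    calc 30 = ∑ _y ∈ Y, 5 := by rw [Finset.sum_const, hY6, smul_eq_mul]
    _ ≤ _ := Finset.sum_le_sum key
  have h4 : ∑ P ∈ pairs, (Y.filter fun y => y ∉ P).card = 4 * pairs.card := by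
    rw [Finset.sum_congr rfl hfilt, Finset.sum_const, smul_eq_mul, Nat.mul_comm]
  have hp8 : 8 ≤ pairs.card := by omega
  refine ⟨pairs.image (fun P => ({P, Y \ P} : Finset (Finset α))), ?_, ?_, ?_⟩
  · intro T hT
    obtain ⟨P, hP, rfl⟩ := Finset.mem_image.1 hT
    exact (hpmem P hP).2.2
  · rw [Finset.card_image_of_injOn]
    · exact hp8
    · intro P hP P' hP' heq
      rcases pair_eq_cases heq with ⟨h1, h2⟩ | ⟨h1, h2⟩
      · exact h1
      · exfalso
        obtain ⟨hPY, hP2, -⟩ := hpmem P hP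
        obtain ⟨hPY', hP2', -⟩ := hpmem P' hP'
        have : (Y \ P').card = 4 := by rw [Finset.card_sdiff_of_subset hPY', hY6, hP2']
        rw [← h1, hP2] at this
        omega
  · intro S hS
    obtain ⟨P, hP, rfl⟩ := Finset.mem_image.1 hS
    exact pair_two_split (hpmem P hP).1 (hpmem P hP).2.1 hY6

end InjectiveSplitSystems
end
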